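/- arXiv:1007.2927 — 4 statements merged into one kernel-verified Lean document; each statement's English description precedes it below -/
import Mathlib

section
/- Let A be a C*-algebra, X a locally compact Hausdorff space, a a positive element of C₀(X,A), and b a positive element of A. Then the set {x ∈ X : there exists ε > 0 such that b is Cuntz subequivalent to (a(x) − ε)₊ in A} is open in X. (In Cuntz semigroup language this set is {x ∈ X : [b] ≪ [a(x)]}, so the map x ↦ [a(x)] is lower semicontinuous with respect to the compact containment relation ≪.) -/
open scoped ZeroAtInfty

/-- `(a - ε)₊`: the result of applying `t ↦ max (t - ε) 0` to `a` by the (non-unital)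
continuous functional calculus. -/
noncomputable def cutdown {A : Type*} [NonUnitalCStarAlgebra A] (ε : ℝ) (a : A) : A :=
  cfcₙ (fun t : ℝ => max (t - ε) 0) a

/-- Cuntz subequivalence of positive elements in a C*-algebra. -/
def CuntzLE {A : Type*} [NonUnitalCStarAlgebra A] (c d : A) : Prop :=
  ∀ δ > (0 : ℝ), ∃ s : A, ‖c - star s * d * s‖ < δ

theorem CuntzLE.trans' {A : Type*} [NonUnitalCStarAlgebra A] {a b c : A}
    (h1 : CuntzLE a b) (h2 : CuntzLE b c) : CuntzLE a c := by
  intro δ hδ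
  obtain ⟨s, hs⟩ := h1 (δ/2) (by positivity)
  obtain ⟨t, ht⟩ := h2 (δ/(2*(‖s‖^2+1))) (by positivity)
  refine ⟨t * s, ?_⟩
  have key : a - star (t * s) * c * (t * s)
      = (a - star s * b * s) + star s * (b - star t * c * t) * s := by
    rw [star_mul]; noncomm_ring
  rw [key]
  have h3 : ‖star s * (b - star t * c * t) * s‖ ≤ ‖s‖ * ‖b - star t * c * t‖ * ‖s‖ := by
    calc ‖star s * (b - star t * c * t) * s‖ ≤ ‖star s * (b - star t * c * t)‖ * ‖s‖ :=
          norm_mul_le _ _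
      _ ≤ ‖star s‖ * ‖b - star t * c * t‖ * ‖s‖ := by gcongr; exact norm_mul_le _ _
      _ = ‖s‖ * ‖b - star t * c * t‖ * ‖s‖ := by rw [norm_star]
  calc ‖(a - star s * b * s) + star s * (b - star t * c * t) * s‖
      ≤ ‖a - star s * b * s‖ + ‖star s * (b - star t * c * t) * s‖ := norm_add_le _ _
    _ < δ := by
        have hs2 : (0:ℝ) ≤ ‖s‖^2 := sq_nonneg _
        have h4 : ‖s‖^2 * ‖b - star t * c * t‖ ≤ ‖s‖^2 * (δ/(2*(‖s‖^2+1))) :=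
          mul_le_mul_of_nonneg_left ht.le hs2
        have h5 : ‖s‖^2 * (δ/(2*(‖s‖^2+1))) < δ/2 := by
          rw [mul_div_assoc', div_lt_div_iff₀ (by positivity) two_pos]
          nlinarith [hδ]
        have h6 : ‖s‖ * ‖b - star t * c * t‖ * ‖s‖ = ‖s‖^2 * ‖b - star t * c * t‖ := by ring
        linarith [h3, hs, h4, h5, h6.le, h6.ge]

theorem cuntzLE_sq {B : Type*} [CStarAlgebra B] [PartialOrder B] [StarOrderedRing B]
    {p : B} (hp : 0 ≤ p) : CuntzLE p (p * p) := by
  intro δ hδ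
  have hη0 : 0 < δ/4 := by positivity
  set η : ℝ := δ/4 with hη
  set f : ℝ → ℝ := fun t => Real.sqrt (max t 0) / (max t 0 + η) with hf
  have hfc : Continuous f := by
    apply Continuous.div (by fun_prop) (by fun_prop)
    intro t
    positivity
  have hsa : IsSelfAdjoint p := .of_nonneg hp
  refine ⟨cfc f p, ?_⟩
  have h1 : star (cfc f p) = cfc f p := (cfc_predicate f p).star_eq
  have hp2 : p * p = cfc (fun t : ℝ => t * t) p := by
    conv_lhs => rw [← cfc_id' ℝ p]
    rw [← cfc_mul _ _ p]
  have key : star (cfc f p) * (p * p) * cfc f p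
      = cfc (fun t => f t * (t * t) * f t) p := by
    rw [h1, hp2, ← cfc_mul _ _ p hfc.continuousOn (by fun_prop),
      ← cfc_mul _ _ p (by fun_prop) hfc.continuousOn]
  rw [key]
  have key2 : p - cfc (fun t => f t * (t * t) * f t) p
      = cfc (fun t : ℝ => t - f t * (t * t) * f t) p := by
    nth_rw 1 [← cfc_id' ℝ p]
    rw [← cfc_sub (fun t : ℝ => t) (fun t => f t * (t * t) * f t) p (by fun_prop)
      (by exact ((hfc.mul (continuous_id.mul continuous_id)).mul hfc).continuousOn)]
  rw [key2]
  refine lt_of_le_of_lt (norm_cfc_le (by positivity : (0:ℝ) ≤ δ/2) fun t ht => ?_)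
    (by linarith)
  have ht0 : 0 ≤ t := spectrum_nonneg_of_nonneg hp ht
  have hft : f t = Real.sqrt t / (t + η) := by rw [hf]; simp [max_eq_left ht0]
  have hu : (0:ℝ) < (t + η)^2 := by positivity
  have hsq : Real.sqrt t * Real.sqrt t = t := Real.mul_self_sqrt ht0
  have hval : f t * (t * t) * f t = t * (t * t) / (t + η)^2 := by
    rw [hft, show Real.sqrt t / (t + η) * (t * t) * (Real.sqrt t / (t + η))
        = (Real.sqrt t * Real.sqrt t) * (t * t) / (t + η)^2 by
          rw [div_mul_eq_mul_div, div_mul_div_comm, ← sq (t + η)]; congr 1; ring, hsq]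
  rw [hval, Real.norm_eq_abs]
  have hrw : t - t * (t * t) / (t + η)^2 = (t * (t+η)^2 - t * (t * t))/(t+η)^2 := by
    field_simp
  rw [hrw, abs_le]
  constructor
  · rw [le_div_iff₀ hu]
    nlinarith [mul_nonneg (mul_nonneg hη0.le ht0) (by linarith : (0:ℝ) ≤ 2*t+η),
      mul_nonneg (by linarith : (0:ℝ) ≤ δ/2) hu.le]
  · rw [div_le_iff₀ hu]
    nlinarith [mul_nonneg (mul_nonneg hη0.le hη0.le) ht0, pow_pos hη0 3, hη]

theorem cuntzLE_of_le {B : Type*} [CStarAlgebra B] [PartialOrder B] [StarOrderedRing B]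
    {p q : B} (hp : 0 ≤ p) (hpq : p ≤ q) : CuntzLE p q := by
  intro δ hδ
  have hq : 0 ≤ q := hp.trans hpq
  have hpsa : IsSelfAdjoint p := .of_nonneg hp
  have hqsa : IsSelfAdjoint q := .of_nonneg hq
  have hη0 : 0 < δ/2 := by positivity
  set η : ℝ := δ/2 with hη
  have hpos : ∀ t : ℝ, 0 < max t 0 + η :=
    fun t => lt_of_lt_of_le hη0 (le_add_of_nonneg_left (le_max_right t 0))
  set fe : ℝ → ℝ := fun t => (Real.sqrt (max t 0 + η))⁻¹ with hfe
  set fm : ℝ → ℝ := fun t => η/(max t 0 + η) with hfm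
  set fn : ℝ → ℝ := fun t => Real.sqrt (η/(max t 0 + η)) with hfn
  set fr : ℝ → ℝ := fun t => Real.sqrt (max t 0) with hfr
  have hce : Continuous fe := by
    refine Continuous.inv₀ (by fun_prop) fun t => ?_
    exact ne_of_gt (Real.sqrt_pos.mpr (hpos t))
  have hcm : Continuous fm :=
    Continuous.div continuous_const (by fun_prop) fun t => ne_of_gt (hpos t)
  have hcn : Continuous fn := Real.continuous_sqrt.comp hcm
  have hcr : Continuous fr := by fun_prop
  set e : B := cfc fe q with he
  set n : B := cfc fn q with hn
  set m : B := cfc fm q with hm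
  set r : B := cfc fr p with hr
  have hesa : star e = e := (cfc_predicate fe q).star_eq
  have hnsa : star n = n := (cfc_predicate fn q).star_eq
  have hrsa : star r = r := (cfc_predicate fr p).star_eq
  refine ⟨e * r, ?_⟩
  have hrr : r * r = p := by
    rw [hr, ← cfc_mul _ _ p hcr.continuousOn hcr.continuousOn]
    have heq : (spectrum ℝ p).EqOn (fun t => fr t * fr t) (fun t : ℝ => t) := fun t ht => by
      have ht0 : 0 ≤ t := spectrum_nonneg_of_nonneg hp ht
      simp [hfr, max_eq_left ht0, Real.mul_self_sqrt ht0]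
    rw [cfc_congr heq, cfc_id' ℝ p]
  have heqe : e * q * e = 1 - m := by
    conv_lhs => rw [← cfc_id' ℝ q]
    rw [he, ← cfc_mul _ _ q hce.continuousOn (by fun_prop),
      ← cfc_mul _ _ q (by fun_prop) hce.continuousOn, hm,
      ← cfc_one (R := ℝ) q, ← cfc_sub _ _ q (by fun_prop) hcm.continuousOn]
    refine cfc_congr fun t ht => ?_
    have ht0 : 0 ≤ t := spectrum_nonneg_of_nonneg hq ht
    have hu : 0 < t + η := by have := hpos t; rwa [max_eq_left ht0] at this
    have hsu : Real.sqrt (t+η) * Real.sqrt (t+η) = t + η := Real.mul_self_sqrt hu.le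
    simp only [hfe, hfm, max_eq_left ht0, Pi.one_apply]
    rw [show ((Real.sqrt (t+η))⁻¹ * t * (Real.sqrt (t+η))⁻¹)
        = t / (Real.sqrt (t+η) * Real.sqrt (t+η)) by
      rw [div_eq_mul_inv, mul_inv]; ring, hsu]
    field_simp; ring
  have hmn : m = n * n := by
    rw [hm, hn, ← cfc_mul _ _ q hcn.continuousOn hcn.continuousOn]
    refine cfc_congr fun t _ => ?_
    exact (Real.mul_self_sqrt (div_nonneg hη0.le (hpos t).le)).symm
  have hmain : p - star (e * r) * q * (e * r) = r * m * r := by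
    calc p - star (e * r) * q * (e * r) = p - r * (e * q * e) * r := by
          rw [star_mul, hesa, hrsa]; noncomm_ring
      _ = p - r * (1 - m) * r := by rw [heqe]
      _ = r * m * r := by rw [mul_sub, mul_one, sub_mul, hrr, sub_sub_cancel]
  rw [hmain]
  have h1 : r * m * r = star (n * r) * (n * r) := by
    rw [star_mul, hnsa, hrsa, hmn]; noncomm_ring
  have h2 : (n * r) * star (n * r) = n * p * n := by
    rw [star_mul, hnsa, hrsa, show n * r * (r * n) = n * (r * r) * n by noncomm_ring, hrr]
  have hconj : n * p * n ≤ n * q * n := by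
    have := star_left_conjugate_le_conjugate hpq n; rwa [hnsa] at this
  have hnpn : 0 ≤ n * p * n := by
    have := star_left_conjugate_nonneg hp n; rwa [hnsa] at this
  have hnqn : n * q * n = cfc (fun t => fn t * t * fn t) q := by
    conv_lhs => rw [← cfc_id' ℝ q]
    rw [hn, ← cfc_mul _ _ q hcn.continuousOn (by fun_prop),
      ← cfc_mul _ _ q (by fun_prop) hcn.continuousOn]
  have hbound : ‖cfc (fun t => fn t * t * fn t) q‖ ≤ η := by
    refine norm_cfc_le hη0.le fun t ht => ?_
    have ht0 : 0 ≤ t := spectrum_nonneg_of_nonneg hq ht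
    have hu : 0 < t + η := by have := hpos t; rwa [max_eq_left ht0] at this
    have hval : fn t * t * fn t = η * t / (t + η) := by
      simp only [hfn, max_eq_left ht0]
      rw [show Real.sqrt (η/(t+η)) * t * Real.sqrt (η/(t+η))
          = Real.sqrt (η/(t+η)) * Real.sqrt (η/(t+η)) * t by ring,
        Real.mul_self_sqrt (div_nonneg hη0.le hu.le)]
      field_simp
    rw [hval, Real.norm_eq_abs, abs_le]
    constructor
    · rw [le_div_iff₀ hu]; nlinarith
    · rw [div_le_iff₀ hu]; nlinarith
  calc ‖r * m * r‖ = ‖n * r‖ * ‖n * r‖ := by rw [h1, CStarRing.norm_star_mul_self]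
    _ = ‖n * p * n‖ := by rw [← CStarRing.norm_self_mul_star, h2]
    _ ≤ ‖n * q * n‖ := CStarAlgebra.norm_le_norm_of_nonneg_of_le hnpn hconj
    _ ≤ η := by rw [hnqn]; exact hbound
    _ < δ := by rw [hη]; linarith

open scoped CStarAlgebra in
set_option maxHeartbeats 1000000 in
theorem cuntzLE_of_inr {A : Type*} [NonUnitalCStarAlgebra A] [PartialOrder A] [StarOrderedRing A]
    {b d : A} (hd : 0 ≤ d)
    (h : CuntzLE (b : A⁺¹) (d : A⁺¹)) : CuntzLE b d := by
  intro δ hδ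
  obtain ⟨s, hs⟩ := h (δ/2) (by positivity)
  have hη0 : 0 < δ/(2*(‖s‖^2+1)) := by positivity
  set η := δ/(2*(‖s‖^2+1)) with hη
  set g : ℝ → ℝ := fun t => min 1 (t/η) with hg
  have hg0 : g 0 = 0 := by simp [hg]
  have hgc : Continuous g := by fun_prop
  set e : A := cfcₙ g d with he
  have hesa : IsSelfAdjoint e := cfcₙ_predicate g d
  have hdsa : (0:A⁺¹) ≤ (d : A⁺¹) := Unitization.inr_nonneg_iff.mpr hd
  have hdsa' : IsSelfAdjoint (d : A⁺¹) := .of_nonneg hdsa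
  have hE : (e : A⁺¹) = cfc g (d : A⁺¹) := Unitization.real_cfcₙ_eq_cfc_inr d g hg0
  set v : A := ((e : A⁺¹) * s).snd with hv
  refine ⟨v, ?_⟩
  have hfst : ((e : A⁺¹) * s).fst = 0 := by
    rw [Unitization.fst_mul, Unitization.fst_inr, zero_mul]
  have hinr : ((v : A) : A⁺¹) = (e : A⁺¹) * s := by
    rw [hv]
    conv_rhs => rw [← Unitization.inl_fst_add_inr_snd_eq ((e:A⁺¹) * s)]
    rw [hfst, Unitization.inl_zero, zero_add]
  rw [← Unitization.norm_inr (𝕜 := ℂ) (b - star v * d * v),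
    Unitization.inr_sub ℂ, Unitization.inr_mul, Unitization.inr_mul, Unitization.inr_star,
    hinr]
  have hkey : star ((e:A⁺¹) * s) * (d:A⁺¹) * ((e:A⁺¹) * s)
      = star s * ((e:A⁺¹) * (d:A⁺¹) * (e:A⁺¹)) * s := by
    rw [star_mul, (hesa.inr ℂ).star_eq]; noncomm_ring
  rw [hkey]
  have hEdE : ‖(d:A⁺¹) - (e:A⁺¹) * (d:A⁺¹) * (e:A⁺¹)‖ ≤ η := by
    rw [hE]
    set E := cfc g (d:A⁺¹) with hEdef
    have hrw : (d:A⁺¹) - E * (d:A⁺¹) * E = cfc (fun t : ℝ => t - g t * t * g t) (d:A⁺¹) := by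
      conv_lhs => rw [← cfc_id' ℝ (d:A⁺¹) hdsa']
      rw [hEdef, ← cfc_mul _ _ _ hgc.continuousOn (by fun_prop),
        ← cfc_mul _ _ _ (by fun_prop) hgc.continuousOn,
        ← cfc_sub _ _ _ (by fun_prop) (by fun_prop)]
    rw [hrw]
    refine norm_cfc_le hη0.le fun t ht => ?_
    have ht0 : 0 ≤ t := spectrum_nonneg_of_nonneg hdsa ht
    rcases le_or_gt η t with hc | hc
    · have : g t = 1 := by
        rw [hg]; exact min_eq_left ((one_le_div hη0).mpr hc)
      simp [this, abs_of_nonneg, hη0.le]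
    · have hgt : g t = t/η := by
        rw [hg]; exact min_eq_right (by rw [div_le_one hη0]; exact hc.le)
      rw [hgt]
      have hval : t - t/η * t * (t/η) = (t*η^2 - t^3)/η^2 := by field_simp
      rw [hval, Real.norm_eq_abs, abs_le]
      constructor
      · rw [le_div_iff₀ (by positivity)]
        nlinarith [mul_nonneg ht0 ht0, mul_le_mul_of_nonneg_left hc.le ht0]
      · rw [div_le_iff₀ (by positivity)]
        nlinarith [mul_nonneg ht0 ht0, mul_nonneg (mul_nonneg ht0 ht0) ht0]
  have hsplit : (b:A⁺¹) - star s * ((e:A⁺¹) * (d:A⁺¹) * (e:A⁺¹)) * s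
      = ((b:A⁺¹) - star s * (d:A⁺¹) * s)
        + star s * ((d:A⁺¹) - (e:A⁺¹) * (d:A⁺¹) * (e:A⁺¹)) * s := by noncomm_ring
  rw [hsplit]
  have h3 : ‖star s * ((d:A⁺¹) - (e:A⁺¹) * (d:A⁺¹) * (e:A⁺¹)) * s‖ ≤ ‖s‖^2 * η := by
    calc ‖star s * ((d:A⁺¹) - (e:A⁺¹) * (d:A⁺¹) * (e:A⁺¹)) * s‖
        ≤ ‖star s * ((d:A⁺¹) - (e:A⁺¹) * (d:A⁺¹) * (e:A⁺¹))‖ * ‖s‖ := norm_mul_le _ _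
      _ ≤ ‖star s‖ * ‖(d:A⁺¹) - (e:A⁺¹) * (d:A⁺¹) * (e:A⁺¹)‖ * ‖s‖ := by
          gcongr; exact norm_mul_le _ _
      _ = ‖s‖^2 * ‖(d:A⁺¹) - (e:A⁺¹) * (d:A⁺¹) * (e:A⁺¹)‖ := by rw [norm_star]; ring
      _ ≤ ‖s‖^2 * η := by
          exact mul_le_mul_of_nonneg_left hEdE (sq_nonneg _)
  have h4 : ‖s‖^2 * η < δ/2 := by
    rw [hη, mul_div_assoc', div_lt_div_iff₀ (by positivity) two_pos]
    nlinarith [sq_nonneg ‖s‖]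
  calc ‖((b:A⁺¹) - star s * (d:A⁺¹) * s)
        + star s * ((d:A⁺¹) - (e:A⁺¹) * (d:A⁺¹) * (e:A⁺¹)) * s‖
      ≤ ‖(b:A⁺¹) - star s * (d:A⁺¹) * s‖
        + ‖star s * ((d:A⁺¹) - (e:A⁺¹) * (d:A⁺¹) * (e:A⁺¹)) * s‖ := norm_add_le _ _
    _ < δ := by linarith

open scoped CStarAlgebra in
set_option maxHeartbeats 1000000 in
theorem cuntzLE_cutdown {A : Type*} [NonUnitalCStarAlgebra A] [PartialOrder A]
    [StarOrderedRing A] {c c' : A} (hc : 0 ≤ c) (hc' : 0 ≤ c') {ε : ℝ} (hε : 0 < ε)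
    (hdist : ‖c - c'‖ ≤ ε/2) : CuntzLE (cutdown ε c) (cutdown (ε/2) c') := by
  have hcut' : 0 ≤ cutdown (ε/2) c' := cfcₙ_nonneg fun t _ => le_max_right _ _
  refine cuntzLE_of_inr hcut' ?_
  have hcsa : IsSelfAdjoint (c : A⁺¹) := .of_nonneg (Unitization.inr_nonneg_iff.mpr hc)
  have hcsa' : IsSelfAdjoint (c' : A⁺¹) := .of_nonneg (Unitization.inr_nonneg_iff.mpr hc')
  have hcu : Continuous (fun t : ℝ => max (t - ε) 0) := by fun_prop
  have hcv : Continuous (fun t : ℝ => max (t - ε/2) 0) := by fun_prop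
  have hcw : Continuous (fun t : ℝ => Real.sqrt (max (t - ε) 0)) := by fun_prop
  have hu : ((cutdown ε c : A) : A⁺¹) = cfc (fun t : ℝ => max (t - ε) 0) (c : A⁺¹) := by
    unfold cutdown
    exact Unitization.real_cfcₙ_eq_cfc_inr c _
      (by show max (0 - ε) 0 = 0; rw [max_eq_right (by linarith)])
  have hv : ((cutdown (ε/2) c' : A) : A⁺¹) = cfc (fun t : ℝ => max (t - ε/2) 0) (c' : A⁺¹) := by
    unfold cutdown
    exact Unitization.real_cfcₙ_eq_cfc_inr c' _
      (by show max (0 - ε/2) 0 = 0; rw [max_eq_right (by linarith)])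
  rw [hu, hv]
  set u : A⁺¹ := cfc (fun t : ℝ => max (t - ε) 0) (c:A⁺¹) with hudef
  set v : A⁺¹ := cfc (fun t : ℝ => max (t - ε/2) 0) (c':A⁺¹) with hvdef
  set w : A⁺¹ := cfc (fun t : ℝ => Real.sqrt (max (t - ε) 0)) (c:A⁺¹) with hwdef
  have hu0 : 0 ≤ u := cfc_nonneg fun t _ => le_max_right _ _
  have husa : IsSelfAdjoint u := .of_nonneg hu0
  have hwsa : star w = w :=
    (cfc_predicate (fun t : ℝ => Real.sqrt (max (t - ε) 0)) (c:A⁺¹)).star_eq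
  have step_a : u * u = w * cfc (fun t : ℝ => t - ε) (c:A⁺¹) * w := by
    rw [hudef, hwdef, ← cfc_mul _ _ _ hcu.continuousOn hcu.continuousOn,
      ← cfc_mul _ _ _ hcw.continuousOn (by fun_prop),
      ← cfc_mul _ _ _ (by fun_prop) hcw.continuousOn]
    refine cfc_congr fun t _ => ?_
    rcases le_or_gt t ε with h | h
    · simp [max_eq_right (by linarith : t - ε ≤ 0)]
    · have h0 : (0:ℝ) ≤ t - ε := by linarith
      simp only [max_eq_left h0]
      rw [show Real.sqrt (t-ε) * (t-ε) * Real.sqrt (t-ε)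
          = (Real.sqrt (t-ε) * Real.sqrt (t-ε)) * (t-ε) by ring, Real.mul_self_sqrt h0]
  have step_b : cfc (fun t : ℝ => t - ε) (c:A⁺¹) = (c:A⁺¹) - algebraMap ℝ A⁺¹ ε := by
    rw [cfc_sub _ _ _ (by fun_prop) (by fun_prop), cfc_id' ℝ _ hcsa, cfc_const ε _ hcsa]
  have halg : ∀ r : ℝ, 0 ≤ r → 0 ≤ algebraMap ℝ A⁺¹ r := by
    intro r hr
    have hst := star_mul_self_nonneg (algebraMap ℝ A⁺¹ (Real.sqrt r))
    rwa [← algebraMap_star_comm, star_trivial, ← map_mul, Real.mul_self_sqrt hr] at hst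
  have hxy : (c:A⁺¹) - algebraMap ℝ A⁺¹ ε ≤ (c':A⁺¹) - algebraMap ℝ A⁺¹ (ε/2) := by
    have h1 : (c:A⁺¹) - (c':A⁺¹) ≤ algebraMap ℝ A⁺¹ (ε/2) := by
      have hsel : IsSelfAdjoint ((c:A⁺¹) - (c':A⁺¹)) := hcsa.sub hcsa'
      have h2 := hsel.le_algebraMap_norm_self
      have h3 : ‖(c:A⁺¹) - (c':A⁺¹)‖ ≤ ε/2 := by
        rw [← Unitization.inr_sub ℂ, Unitization.norm_inr]; exact hdist
      refine h2.trans ?_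
      rw [← sub_nonneg, ← map_sub]
      exact halg _ (by linarith)
    have h4 : (c:A⁺¹) ≤ (c':A⁺¹) + algebraMap ℝ A⁺¹ (ε/2) :=
      sub_le_iff_le_add'.mp h1
    calc (c:A⁺¹) - algebraMap ℝ A⁺¹ ε
        ≤ ((c':A⁺¹) + algebraMap ℝ A⁺¹ (ε/2)) - algebraMap ℝ A⁺¹ ε := sub_le_sub_right h4 _
      _ = (c':A⁺¹) - algebraMap ℝ A⁺¹ (ε/2) := by
          rw [show algebraMap ℝ A⁺¹ ε = algebraMap ℝ A⁺¹ (ε/2) + algebraMap ℝ A⁺¹ (ε/2) by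
            rw [← map_add]; norm_num]
          abel
  have hyv : (c':A⁺¹) - algebraMap ℝ A⁺¹ (ε/2) ≤ v := by
    rw [show (c':A⁺¹) - algebraMap ℝ A⁺¹ (ε/2) = cfc (fun t : ℝ => t - ε/2) (c':A⁺¹) by
      rw [cfc_sub _ _ _ (by fun_prop) (by fun_prop), cfc_id' ℝ _ hcsa', cfc_const (ε/2) _ hcsa'],
      hvdef]
    exact cfc_mono (fun t _ => le_max_left _ _) (by fun_prop) hcv.continuousOn
  have hle : u * u ≤ star w * v * w := by
    rw [step_a, step_b, hwsa]
    have h := star_left_conjugate_le_conjugate (hxy.trans hyv) w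
    rwa [hwsa] at h
  have huu : 0 ≤ u * u := by
    have := star_mul_self_nonneg u; rwa [husa.star_eq] at this
  refine (cuntzLE_sq hu0).trans' ((cuntzLE_of_le huu hle).trans' ?_)
  intro δ hδ
  exact ⟨w, by simpa using hδ⟩

/-- For a positive `a ∈ C₀(X, A)` and positive `b ∈ A`, the set
`{x : [b] ≪ [a(x)]}`, i.e. those `x` for which `b ≼ (a(x) - ε)₊` for some `ε > 0`,
is open; so `x ↦ [a(x)]` is lower semicontinuous with respect to `≪`. -/
theorem stmt_2 {X : Type*} [TopologicalSpace X] [LocallyCompactSpace X] [T2Space X]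
    {A : Type*} [NonUnitalCStarAlgebra A] [PartialOrder A] [StarOrderedRing A]
    (a : C₀(X, A)) (ha : ∀ x, 0 ≤ a x) (b : A) (hb : 0 ≤ b) :
    IsOpen {x : X | ∃ ε > (0 : ℝ), CuntzLE b (cutdown ε (a x))} := by
  rw [isOpen_iff_mem_nhds]
  rintro x₀ ⟨ε, hε, hC⟩
  have hcont : ContinuousAt (fun x => ‖a x - a x₀‖) x₀ :=
    (((map_continuous a).sub continuous_const).norm).continuousAt
  have hev := hcont (Iio_mem_nhds (show ‖a x₀ - a x₀‖ < ε/2 by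
    rw [sub_self, norm_zero]; positivity))
  filter_upwards [hev] with x hx
  exact ⟨ε/2, by positivity,
    hC.trans' (cuntzLE_cutdown (ha x₀) (ha x) hε
      (by rw [norm_sub_rev]; exact le_of_lt hx))⟩
end

section
/- Let A be a C*-algebra, X a locally compact Hausdorff space, a a positive element of C₀(X,A), and b a positive element of A. Then the set {x ∈ X : (there exists ε > 0 such that b is Cuntz subequivalent to (a(x) − ε)₊ in A) and a(x) is not Cuntz subequivalent to b in A} is open in X. (In Cuntz semigroup language this set is {x ∈ X : [b] ≪ [a(x)] and [b] ≠ [a(x)]}.) -/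
open scoped ZeroAtInfty

section Aux
variable {A : Type*} [NonUnitalCStarAlgebra A] [PartialOrder A] [StarOrderedRing A]

open Unitization

/-- If `0 ≤ c ≤ d` in a unital C*-algebra, then `c` is approximately `star t * d * t`. -/
lemma cuntzLE_unital_of_le {M : Type*} [CStarAlgebra M] [PartialOrder M] [StarOrderedRing M]
    (c d : M) (hc : 0 ≤ c) (hcd : c ≤ d) {δ : ℝ}
    (hδ : 0 < δ) : ∃ t : M, ‖c - star t * d * t‖ < δ := by
  have hd : 0 ≤ d := hc.trans hcd
  have hdsa : IsSelfAdjoint d := .of_nonneg hd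
  set ν : ℝ := δ / 2 with hν
  have hν0 : 0 < ν := by positivity
  set g : ℝ → ℝ := fun t => (Real.sqrt (max t 0 + ν))⁻¹ with hgdef
  have hgc : Continuous g := by
    refine Continuous.inv₀
      (Real.continuous_sqrt.comp (((continuous_id.max continuous_const).add continuous_const)))
      fun t => ?_
    exact (Real.sqrt_pos.mpr (by positivity)).ne'
  set f : ℝ → ℝ := fun t => g t * t * g t with hfdef
  have hfc : Continuous f := (hgc.mul continuous_id).mul hgc
  have hfval : ∀ t, f t = t * (max t 0 + ν)⁻¹ := by
    intro t
    have h1 : (0:ℝ) < max t 0 + ν := by positivity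
    simp only [hfdef, hgdef]
    rw [show (Real.sqrt (max t 0 + ν))⁻¹ * t * (Real.sqrt (max t 0 + ν))⁻¹
        = t * ((Real.sqrt (max t 0 + ν)) * (Real.sqrt (max t 0 + ν)))⁻¹ by
      rw [mul_inv]; ring]
    rw [Real.mul_self_sqrt h1.le]
  set q : ℝ → ℝ := fun t => 1 - f t with hqdef
  have hqc : Continuous q := continuous_const.sub hfc
  have hsqc : Continuous fun t => Real.sqrt (q t) := Real.continuous_sqrt.comp hqc
  have hq0 : ∀ t, 0 ≤ q t := by
    intro t
    have h1 : (0:ℝ) < max t 0 + ν := by positivity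
    simp only [hqdef, hfval t, sub_nonneg, ← div_eq_mul_inv]
    rw [div_le_one h1]
    have := le_max_left t 0
    linarith
  set e : M := cfc g d with hedef
  have hesa : IsSelfAdjoint e := cfc_predicate g d
  set sc : M := CFC.sqrt c with hscdef
  have hscsa : IsSelfAdjoint sc := .of_nonneg (CFC.sqrt_nonneg c)
  set w : M := cfc (fun t => Real.sqrt (q t)) d with hwdef
  have hwsa : IsSelfAdjoint w := cfc_predicate _ d
  refine ⟨e * sc, ?_⟩
  have h2a : cfc (fun t => g t * t * g t) d = cfc (fun t => g t * t) d * cfc g d :=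
    cfc_mul _ _ d (hgc.mul continuous_id).continuousOn hgc.continuousOn
  have h2b : cfc (fun t => g t * t) d = cfc g d * cfc (id : ℝ → ℝ) d :=
    cfc_mul _ _ d hgc.continuousOn continuous_id.continuousOn
  have h2 : e * d * e = cfc f d := by
    rw [hfdef, h2a, h2b, cfc_id ℝ d, hedef]
  have h4 : cfc q d = 1 - cfc f d := by
    rw [hqdef]
    rw [cfc_sub _ _ d continuousOn_const hfc.continuousOn, cfc_const_one ℝ d]
  have h5 : w * w = cfc q d := by
    rw [hwdef, ← cfc_mul _ _ d hsqc.continuousOn hsqc.continuousOn]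
    exact cfc_congr fun t _ => Real.mul_self_sqrt (hq0 t)
  have h3 : c - star (e * sc) * d * (e * sc) = (sc * w) * (w * sc) := by
    rw [star_mul, hesa.star_eq, hscsa.star_eq]
    have hc' : sc * sc = c := CFC.sqrt_mul_sqrt_self c hc
    calc c - sc * e * d * (e * sc) = sc * ((1 : M) - cfc f d) * sc := by
          rw [← h2, ← hc']; noncomm_ring
      _ = sc * (w * w) * sc := by rw [h5, h4]
      _ = (sc * w) * (w * sc) := by noncomm_ring
  rw [h3]
  have hx : (sc * w) = star (w * sc) := by rw [star_mul, hwsa.star_eq, hscsa.star_eq]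
  rw [hx]
  rw [CStarRing.norm_star_mul_self, ← CStarRing.norm_self_mul_star]
  have hxx : (w * sc) * star (w * sc) = w * c * w := by
    rw [star_mul, hwsa.star_eq, hscsa.star_eq, ← CFC.sqrt_mul_sqrt_self c hc, ← hscdef]
    noncomm_ring
  rw [hxx]
  have h6 : w * c * w ≤ w * d * w := by
    simpa [hwsa.star_eq] using star_left_conjugate_le_conjugate hcd w
  have h7 : (0 : M) ≤ w * c * w := by
    simpa [hwsa.star_eq] using star_left_conjugate_nonneg hc w
  have h8 : ‖w * c * w‖ ≤ ‖w * d * w‖ := CStarAlgebra.norm_le_norm_of_nonneg_of_le h7 h6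
  have h9a : cfc (fun t => Real.sqrt (q t) * t * Real.sqrt (q t)) d
      = cfc (fun t => Real.sqrt (q t) * t) d * cfc (fun t => Real.sqrt (q t)) d :=
    cfc_mul _ _ d (hsqc.mul continuous_id).continuousOn hsqc.continuousOn
  have h9b : cfc (fun t => Real.sqrt (q t) * t) d
      = cfc (fun t => Real.sqrt (q t)) d * cfc (id : ℝ → ℝ) d :=
    cfc_mul _ _ d hsqc.continuousOn continuous_id.continuousOn
  have h9 : w * d * w = cfc (fun t => Real.sqrt (q t) * t * Real.sqrt (q t)) d := by
    rw [h9a, h9b, cfc_id ℝ d, hwdef]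
  have h10 : ‖w * d * w‖ ≤ ν := by
    rw [h9]
    refine norm_cfc_le hν0.le fun t ht => ?_
    have ht0 : 0 ≤ t := spectrum_nonneg_of_nonneg hd ht
    have h1 : (0:ℝ) < t + ν := by linarith
    have hqt : q t = ν / (t + ν) := by
      simp only [hqdef, hfval t, max_eq_left ht0]
      field_simp
      ring
    rw [show Real.sqrt (q t) * t * Real.sqrt (q t)
        = t * (Real.sqrt (q t) * Real.sqrt (q t)) by ring,
      Real.mul_self_sqrt (hq0 t), hqt, Real.norm_eq_abs,
      abs_of_nonneg (by positivity)]
    rw [mul_div_assoc'] at *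
    rw [div_le_iff₀ h1]
    nlinarith
  calc ‖w * c * w‖ ≤ ‖w * d * w‖ := h8
    _ ≤ ν := h10
    _ < δ := by rw [hν]; linarith

lemma cutdown_nonneg (ε : ℝ) (p : A) : 0 ≤ cutdown ε p :=
  cfcₙ_nonneg fun t _ => le_max_right _ _

lemma norm_cutdown_sub_cutdown_le {ε γ : ℝ} (hε : 0 < ε) (hγ : 0 < γ) (p : A) :
    ‖cutdown ε p - cutdown (ε + γ) p‖ ≤ γ := by
  rw [cutdown, cutdown,
    ← cfcₙ_sub (R := ℝ) (fun t => max (t - ε) 0) (fun t => max (t - (ε + γ)) 0) p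
      (by fun_prop) (by simp [hε.le]) (by fun_prop) (by simp [hε.le, hγ.le]; linarith)]
  refine norm_cfcₙ_le fun x _ => ?_
  rw [Real.norm_eq_abs]
  calc |max (x - ε) 0 - max (x - (ε + γ)) 0| ≤ |(x - ε) - (x - (ε + γ))| :=
        abs_max_sub_max_le_abs _ _ _
    _ = γ := by rw [show (x - ε) - (x - (ε + γ)) = γ by ring, abs_of_pos hγ]

lemma algebraMap_real_nonneg {M : Type*} [CStarAlgebra M] [PartialOrder M] [StarOrderedRing M]
    {u : ℝ} (hu : 0 ≤ u) : 0 ≤ algebraMap ℝ M u := by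
  have h : algebraMap ℝ M u = star (algebraMap ℝ M (Real.sqrt u)) * algebraMap ℝ M (Real.sqrt u) := by
    rw [← algebraMap_star_comm, star_trivial, ← map_mul, Real.mul_self_sqrt hu]
  rw [h]
  exact star_mul_self_nonneg _

lemma algebraMap_real_mono {M : Type*} [CStarAlgebra M] [PartialOrder M] [StarOrderedRing M]
    {u v : ℝ} (huv : u ≤ v) : algebraMap ℝ M u ≤ algebraMap ℝ M v := by
  have := algebraMap_real_nonneg (M := M) (sub_nonneg.mpr huv)
  rw [map_sub, sub_nonneg] at this
  exact this

lemma selfadj_le_algebraMap_of_norm_le {M : Type*} [CStarAlgebra M] [PartialOrder M]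
    [StarOrderedRing M] {x : M} {u : ℝ} (hx : IsSelfAdjoint x) (hxu : ‖x‖ ≤ u) :
    x ≤ algebraMap ℝ M u :=
  le_trans hx.le_algebraMap_norm_self (algebraMap_real_mono hxu)

lemma key (ε : ℝ) (hε : 0 < ε) (p q : A) (hp : 0 ≤ p) (hq : 0 ≤ q)
    (hpq : ‖p - q‖ ≤ ε / 4) : CuntzLE (cutdown ε p) (cutdown (ε / 4) q) := by
  have hε4 : (0:ℝ) < ε / 4 := by linarith
  set B : A := cutdown (ε / 4) q with hBdef
  have hB : 0 ≤ B := cutdown_nonneg _ _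
  intro δ hδ
  set γ : ℝ := δ / 2 with hγdef
  have hγ : 0 < γ := by positivity
  -- Step 1: `↑p - ε•1 ≤ ↑B` in the unitization `M`.
  have hpsa : IsSelfAdjoint p := .of_nonneg hp
  have hqsa : IsSelfAdjoint q := .of_nonneg hq
  have h1 : (p : Unitization ℂ A) ≤ (q : Unitization ℂ A) + algebraMap ℝ _ (ε / 4) := by
    rw [← sub_le_iff_le_add']
    rw [← Unitization.inr_sub ℂ p q]
    refine selfadj_le_algebraMap_of_norm_le ?_ ?_
    · exact Unitization.isSelfAdjoint_inr.mpr (hpsa.sub hqsa)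
    · rw [Unitization.norm_inr]; exact hpq
  have hqB : q - B = cfcₙ (fun t : ℝ => min t (ε / 4)) q := by
    have : (fun t : ℝ => min t (ε / 4)) = fun t : ℝ => (id t : ℝ) - max (t - ε / 4) 0 := by
      funext t
      rcases le_total t (ε / 4) with h | h
      · rw [min_eq_left h, max_eq_right (by linarith)]; simp
      · rw [min_eq_right h, max_eq_left (by linarith)]; simp
    rw [this, cfcₙ_sub _ _ q (by fun_prop) (by simp) (by fun_prop) (by simp [hε4.le]),
      cfcₙ_id ℝ q, hBdef, cutdown]
  have h2 : (q : Unitization ℂ A) ≤ (B : Unitization ℂ A) + algebraMap ℝ _ (ε / 4) := by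
    rw [← sub_le_iff_le_add', ← Unitization.inr_sub ℂ q B]
    refine selfadj_le_algebraMap_of_norm_le ?_ ?_
    · exact Unitization.isSelfAdjoint_inr.mpr (hqsa.sub (.of_nonneg hB))
    · rw [Unitization.norm_inr, hqB]
      refine norm_cfcₙ_le fun t ht => ?_
      have ht0 : 0 ≤ t := quasispectrum_nonneg_of_nonneg q hq t ht
      rw [Real.norm_eq_abs, abs_of_nonneg (le_min ht0 hε4.le)]
      exact min_le_right _ _
  have hle : (p : Unitization ℂ A) - algebraMap ℝ _ ε ≤ (B : Unitization ℂ A) := by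
    rw [sub_le_iff_le_add]
    calc (p : Unitization ℂ A) ≤ (q : Unitization ℂ A) + algebraMap ℝ _ (ε / 4) := h1
      _ ≤ ((B : Unitization ℂ A) + algebraMap ℝ _ (ε / 4)) + algebraMap ℝ _ (ε / 4) :=
          add_le_add h2 le_rfl
      _ = (B : Unitization ℂ A) + algebraMap ℝ _ (ε / 4 + ε / 4) := by
          rw [map_add]; abel
      _ ≤ (B : Unitization ℂ A) + algebraMap ℝ _ ε :=
          add_le_add le_rfl (algebraMap_real_mono (by linarith))
  -- Step 2: the function `m`.
  set m : ℝ → ℝ := fun t => Real.sqrt (max (t - (ε + γ)) 0 / max (t - ε) γ) with hmdef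
  have hmc : Continuous m := by
    refine Real.continuous_sqrt.comp <| Continuous.div (by fun_prop) (by fun_prop)
      fun t => (lt_max_of_lt_right hγ).ne'
  have hm0 : m 0 = 0 := by
    simp only [hmdef, zero_sub, max_eq_right (by linarith : -(ε + γ) ≤ (0:ℝ)), zero_div,
      Real.sqrt_zero]
  have hmkey : ∀ t : ℝ, m t * (t - ε) * m t = max (t - (ε + γ)) 0 := by
    intro t
    have hv : (0:ℝ) < max (t - ε) γ := lt_max_of_lt_right hγ
    have hu : (0:ℝ) ≤ max (t - (ε + γ)) 0 := le_max_right _ _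
    have hm2 : m t * m t = max (t - (ε + γ)) 0 / max (t - ε) γ :=
      Real.mul_self_sqrt (by positivity)
    rw [show m t * (t - ε) * m t = (t - ε) * (m t * m t) by ring, hm2]
    rcases le_total t (ε + γ) with h | h
    · rw [max_eq_right (by linarith : t - (ε + γ) ≤ 0)]
      simp
    · rw [max_eq_left (by linarith : γ ≤ t - ε)]
      rw [max_eq_left (by linarith : (0:ℝ) ≤ t - (ε + γ))]
      have hne : t - ε ≠ 0 := ne_of_gt (by linarith)
      field_simp
  -- Step 3: conjugation by `m(p)`.
  set mA : A := cfcₙ m p with hmAdef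
  have hmA : (mA : Unitization ℂ A) = cfc m (p : Unitization ℂ A) :=
    Unitization.real_cfcₙ_eq_cfc_inr p m hm0
  have hmAsa : IsSelfAdjoint mA := cfcₙ_predicate m p
  have hpM : IsSelfAdjoint (p : Unitization ℂ A) := Unitization.isSelfAdjoint_inr.mpr hpsa
  have hmid : (p : Unitization ℂ A) - algebraMap ℝ _ ε = cfc (fun t : ℝ => t - ε) (p : Unitization ℂ A) := by
    rw [show (fun t : ℝ => t - ε) = fun t : ℝ => (id t : ℝ) - (fun _ : ℝ => ε) t from rfl,
      cfc_sub _ _ _ (by fun_prop) (by fun_prop), cfc_id ℝ _, cfc_const ε _]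
  have hconj1 : cfc m (p : Unitization ℂ A) * ((p : Unitization ℂ A) - algebraMap ℝ _ ε)
      * cfc m (p : Unitization ℂ A) = ((cutdown (ε + γ) p : A) : Unitization ℂ A) := by
    rw [hmid, ← cfc_mul m (fun t : ℝ => t - ε) _ hmc.continuousOn (by fun_prop),
      ← cfc_mul (fun t : ℝ => m t * (t - ε)) m _ ((hmc.mul (by fun_prop)).continuousOn)
        hmc.continuousOn]
    rw [cutdown, Unitization.real_cfcₙ_eq_cfc_inr p _ (by simp; linarith)]
    exact cfc_congr fun t _ => hmkey t
  have hconj : ((cutdown (ε + γ) p : A) : Unitization ℂ A)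
      ≤ ((mA * B * mA : A) : Unitization ℂ A) := by
    have h := IsSelfAdjoint.conjugate_le_conjugate hle (cfc_predicate m (p : Unitization ℂ A))
    rw [hconj1] at h
    refine h.trans_eq ?_
    rw [Unitization.inr_mul, Unitization.inr_mul, ← hmA]
  -- Step 4: apply the unital lemma.
  obtain ⟨t, ht⟩ := cuntzLE_unital_of_le _ _
    (Unitization.inr_nonneg_iff.mpr (cutdown_nonneg (ε + γ) p)) hconj
    (show (0:ℝ) < δ / 2 by linarith)
  set s : A := t.fst • mA + mA * t.snd with hsdef
  have hs : (s : Unitization ℂ A) = (mA : Unitization ℂ A) * t := by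
    refine Unitization.ext ?_ ?_ <;>
      simp [hsdef, Unitization.fst_mul, Unitization.snd_mul]
  have hconv : star t * ((mA * B * mA : A) : Unitization ℂ A) * t
      = ((star s * B * s : A) : Unitization ℂ A) := by
    have h1 : ((star s * B * s : A) : Unitization ℂ A)
        = star ((s : A) : Unitization ℂ A) * ((B : A) : Unitization ℂ A)
          * ((s : A) : Unitization ℂ A) := by
      rw [Unitization.inr_mul, Unitization.inr_mul, Unitization.inr_star]
    rw [h1, hs, star_mul, (Unitization.isSelfAdjoint_inr.mpr hmAsa).star_eq,
      Unitization.inr_mul, Unitization.inr_mul]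
    noncomm_ring
  rw [hconv] at ht
  rw [← Unitization.inr_sub ℂ, Unitization.norm_inr] at ht
  refine ⟨s, ?_⟩
  have hsplit : cutdown ε p - star s * B * s
      = (cutdown ε p - cutdown (ε + γ) p) + (cutdown (ε + γ) p - star s * B * s) := by abel
  calc ‖cutdown ε p - star s * B * s‖
      ≤ ‖cutdown ε p - cutdown (ε + γ) p‖ + ‖cutdown (ε + γ) p - star s * B * s‖ := by
        rw [hsplit]; exact norm_add_le _ _
    _ < δ := by
        have h1 := norm_cutdown_sub_cutdown_le hε hγ p
        rw [hγdef] at h1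
        linarith

lemma cuntzLE_trans {b c d : A} (h1 : CuntzLE b c) (h2 : CuntzLE c d) : CuntzLE b d := by
  intro δ hδ
  obtain ⟨s₁, hs₁⟩ := h1 (δ / 2) (by linarith)
  obtain ⟨s₂, hs₂⟩ := h2 (δ / (2 * (‖s₁‖ ^ 2 + 1))) (by positivity)
  refine ⟨s₂ * s₁, ?_⟩
  have : b - star (s₂ * s₁) * d * (s₂ * s₁)
      = (b - star s₁ * c * s₁) + star s₁ * (c - star s₂ * d * s₂) * s₁ := by
    simp only [star_mul]
    noncomm_ring
  rw [this]
  calc ‖(b - star s₁ * c * s₁) + star s₁ * (c - star s₂ * d * s₂) * s₁‖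
      ≤ ‖b - star s₁ * c * s₁‖ + ‖star s₁ * (c - star s₂ * d * s₂) * s₁‖ := norm_add_le _ _
    _ ≤ ‖b - star s₁ * c * s₁‖ + ‖s₁‖ * ‖c - star s₂ * d * s₂‖ * ‖s₁‖ := by
        gcongr
        calc ‖star s₁ * (c - star s₂ * d * s₂) * s₁‖
            ≤ ‖star s₁ * (c - star s₂ * d * s₂)‖ * ‖s₁‖ := norm_mul_le _ _
          _ ≤ ‖star s₁‖ * ‖c - star s₂ * d * s₂‖ * ‖s₁‖ := by gcongr; exact norm_mul_le _ _
          _ = ‖s₁‖ * ‖c - star s₂ * d * s₂‖ * ‖s₁‖ := by rw [norm_star]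
    _ < δ := by
        have h1 : ‖s₁‖ * ‖c - star s₂ * d * s₂‖ * ‖s₁‖ ≤ δ / 2 := by
          have hn : (0:ℝ) ≤ ‖s₁‖ := norm_nonneg _
          have := hs₂.le
          calc ‖s₁‖ * ‖c - star s₂ * d * s₂‖ * ‖s₁‖
              ≤ ‖s₁‖ * (δ / (2 * (‖s₁‖ ^ 2 + 1))) * ‖s₁‖ := by gcongr
            _ = ‖s₁‖ ^ 2 * (δ / (2 * (‖s₁‖ ^ 2 + 1))) := by ring
            _ ≤ (‖s₁‖ ^ 2 + 1) * (δ / (2 * (‖s₁‖ ^ 2 + 1))) := by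
                gcongr; linarith
            _ = δ / 2 := by field_simp
        linarith
  
lemma isClosed_cuntzLE (b : A) : IsClosed {c : A | CuntzLE c b} := by
  refine isClosed_of_closure_subset fun c hc δ hδ => ?_
  obtain ⟨c', hc', hcc'⟩ := Metric.mem_closure_iff.mp hc (δ / 2) (by linarith)
  obtain ⟨s, hs⟩ := hc' (δ / 2) (by linarith)
  refine ⟨s, ?_⟩
  have h1 : c - star s * b * s = (c - c') + (c' - star s * b * s) := by abel
  rw [h1]
  have h2 := norm_add_le (c - c') (c' - star s * b * s)
  rw [dist_eq_norm] at hcc'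
  linarith

end Aux

/-- For a positive `a ∈ C₀(X, A)` and positive `b ∈ A`, the set
`{x : [b] ≪ [a(x)] and [b] ≠ [a(x)]}`, i.e. those `x` for which `b ≼ (a(x) - ε)₊` for some
`ε > 0` and `a(x)` is not Cuntz subequivalent to `b`, is open. -/
theorem stmt_3 {X : Type*} [TopologicalSpace X] [LocallyCompactSpace X] [T2Space X]
    {A : Type*} [NonUnitalCStarAlgebra A] [PartialOrder A] [StarOrderedRing A]
    (a : C₀(X, A)) (ha : ∀ x, 0 ≤ a x) (b : A) (hb : 0 ≤ b) :
    IsOpen {x : X | (∃ ε > (0 : ℝ), CuntzLE b (cutdown ε (a x))) ∧ ¬ CuntzLE (a x) b} := by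
  rw [isOpen_iff_forall_mem_open]
  rintro x₀ ⟨⟨ε, hε, hbx₀⟩, hnx₀⟩
  refine ⟨{x | ‖a x - a x₀‖ < ε / 4} ∩ (⇑a) ⁻¹' {c | CuntzLE c b}ᶜ, ?_, ?_, ?_, ?_⟩
  · rintro x ⟨hx1, hx2⟩
    refine ⟨⟨ε / 4, by linarith, ?_⟩, hx2⟩
    refine cuntzLE_trans hbx₀ ?_
    refine key ε hε (a x₀) (a x) (ha x₀) (ha x) ?_
    rw [← norm_neg]
    simpa using hx1.le
  · apply IsOpen.inter
    · have : Continuous fun x => ‖a x - a x₀‖ := by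
        exact (((map_continuous a).sub continuous_const).norm)
      exact isOpen_lt this continuous_const
    · exact (isClosed_cuntzLE b).isOpen_compl.preimage (map_continuous a)
  · simp only [Set.mem_setOf_eq, sub_self, norm_zero]
    positivity
  · exact hnx₀
end

section
/- Let X be a compact Hausdorff space and A a separable unital C*-algebra that is finite for projections. Let a be a positive element of C(X,A) such that for every x ∈ X the spectrum of a(x) is contained in {0} ∪ [δ, ∞) for some δ > 0 depending on x, and such that the support projections are pairwise Murray–von Neumann equivalent: χ(a(x)) ~ χ(a(y)) for all x, y ∈ X. Then the map x ↦ χ(a(x)) is a continuous map from X to A, and moreover a is Cuntz equivalent in C(X,A) to the projection x ↦ χ(a(x)). -/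
/-- A projection in a C*-algebra: a self-adjoint idempotent. -/
def IsProjectionElem {A : Type*} [Mul A] [Star A] (e : A) : Prop :=
  star e = e ∧ e * e = e

/-- Murray–von Neumann equivalence of projections. -/
def MvNEquiv {A : Type*} [Mul A] [Star A] (e f : A) : Prop :=
  ∃ v, star v * v = e ∧ v * star v = f

/-- `A` is finite for projections: `e ≤ f`, `e ~ f` implies `e = f` for projections. -/
def FiniteForProjections (A : Type*) [Mul A] [Star A] [PartialOrder A] : Prop :=
  ∀ e f : A, IsProjectionElem e → IsProjectionElem f → e ≤ f → MvNEquiv e f → e = f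

/-- `e` is the support projection of `a`: a projection lying in the (non-unital)
C*-subalgebra generated by `a` with `e * a = a`. -/
def IsSupportProjection {A : Type*} [CStarAlgebra A] (e a : A) : Prop :=
  IsProjectionElem e ∧ e * a = a ∧
    e ∈ closure ((NonUnitalStarAlgebra.adjoin ℂ {a} : NonUnitalStarSubalgebra ℂ A) : Set A)

set_option maxHeartbeats 1000000

section RingAux
variable {A : Type*} [Ring A]

private lemma key_alg {p q : A} (hp : p * p = p) (hq : q * q = q) :
    (p * q + (1 - p) * (1 - q)) * (q * p + (1 - q) * (1 - p)) = 1 - (p - q) * (p - q) := by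
  have hp' : ∀ x : A, p * (p * x) = p * x := fun x => by rw [← mul_assoc, hp]
  have hq' : ∀ x : A, q * (q * x) = q * x := fun x => by rw [← mul_assoc, hq]
  simp only [mul_add, add_mul, mul_sub, sub_mul, mul_one, one_mul, mul_assoc, hp', hq', hp, hq]
  abel

private lemma comm_alg {p q : A} (hp : p * p = p) (hq : q * q = q) :
    p * ((p - q) * (p - q)) = ((p - q) * (p - q)) * p := by
  have hp' : ∀ x : A, p * (p * x) = p * x := fun x => by rw [← mul_assoc, hp]
  simp only [mul_sub, sub_mul, mul_assoc, hp', hp, hq]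
  abel

private lemma zp_alg {p q : A} (hp : p * p = p) (hq : q * q = q) :
    (q * p + (1 - q) * (1 - p)) * p = q * (q * p + (1 - q) * (1 - p)) := by
  have hp' : ∀ x : A, p * (p * x) = p * x := fun x => by rw [← mul_assoc, hp]
  have hq' : ∀ x : A, q * (q * x) = q * x := fun x => by rw [← mul_assoc, hq]
  simp only [mul_add, add_mul, mul_sub, sub_mul, mul_one, one_mul, mul_assoc, hp', hq', hp, hq]
  abel

end RingAux

open Polynomial

section CStarAux

variable {A : Type*} [CStarAlgebra A]

/-- A selfadjoint two-sided unit for `a` is a two-sided unit for everything in the closed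
non-unital star subalgebra generated by `a`. -/
private lemma unit_on_closure {e a : A} (he : star e = e) (hea : e * a = a) (hae : a * e = a) :
    ∀ b ∈ closure ((NonUnitalStarAlgebra.adjoin ℂ {a} : NonUnitalStarSubalgebra ℂ A) : Set A),
      e * b = b ∧ b * e = b := by
  let S : NonUnitalStarSubalgebra ℂ A :=
  { carrier := {b | e * b = b ∧ b * e = b}
    add_mem' := fun hx hy => ⟨by rw [mul_add, hx.1, hy.1], by rw [add_mul, hx.2, hy.2]⟩
    zero_mem' := ⟨mul_zero e, zero_mul e⟩
    mul_mem' := fun hx hy => ⟨by rw [← mul_assoc, hx.1], by rw [mul_assoc, hy.2]⟩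
    smul_mem' := fun c x hx => ⟨by rw [mul_smul_comm, hx.1], by rw [smul_mul_assoc, hx.2]⟩
    star_mem' := fun hx => ⟨by rw [← he, ← star_mul, hx.2], by rw [← he, ← star_mul, hx.1]⟩ }
  have hclosed : IsClosed (S : Set A) :=
    (isClosed_eq (by fun_prop) continuous_id).inter (isClosed_eq (by fun_prop) continuous_id)
  have hsub : ((NonUnitalStarAlgebra.adjoin ℂ {a} : NonUnitalStarSubalgebra ℂ A) : Set A) ⊆ S := by
    intro b hb
    exact NonUnitalStarAlgebra.adjoin_le
      (by simpa [S, Set.singleton_subset_iff] using ⟨hea, hae⟩) hb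
  intro b hb
  exact closure_minimal hsub hclosed hb

private lemma pow_mem_adjoin (a : A) {n : ℕ} (hn : 0 < n) :
    a ^ n ∈ (NonUnitalStarAlgebra.adjoin ℂ {a} : NonUnitalStarSubalgebra ℂ A) := by
  induction n with
  | zero => omega
  | succ n ih =>
    have hmem : a ∈ (NonUnitalStarAlgebra.adjoin ℂ {a} : NonUnitalStarSubalgebra ℂ A) :=
      NonUnitalStarAlgebra.subset_adjoin ℂ {a} (Set.mem_singleton a)
    rcases Nat.eq_zero_or_pos n with rfl | hn'
    · rw [pow_one]; exact hmem
    · rw [pow_succ]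
      exact mul_mem (ih hn') hmem

private lemma aeval_mem_adjoin (a : A) {q : ℝ[X]} (hq : q.coeff 0 = 0) :
    (Polynomial.aeval a q : A) ∈
      (NonUnitalStarAlgebra.adjoin ℂ {a} : NonUnitalStarSubalgebra ℂ A) := by
  rw [Polynomial.aeval_eq_sum_range]
  refine sum_mem fun i _ => ?_
  rcases Nat.eq_zero_or_pos i with rfl | hi
  · rw [hq, zero_smul]; exact zero_mem _
  · have : (q.coeff i : ℝ) • a ^ i = ((q.coeff i : ℝ) : ℂ) • a ^ i := by
      simp
    rw [this]
    exact SMulMemClass.smul_mem _ (pow_mem_adjoin a hi)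

variable [Nontrivial A]

private lemma spectrum_subset_Icc {b : A} {M : ℝ} (hbM : ‖b‖ ≤ M) :
    spectrum ℝ b ⊆ Set.Icc (-M) M := by
  intro t ht
  have h1 : |t| ≤ ‖b‖ := by simpa using spectrum.norm_le_norm_of_mem ht
  exact abs_le.mp (h1.trans hbM)

private lemma norm_cfc_sub_aeval_le {b : A} (hb : IsSelfAdjoint b) {f : ℝ → ℝ}
    (hf : Continuous f) (p : ℝ[X]) {M c : ℝ} (hbM : ‖b‖ ≤ M) (hc : 0 ≤ c)
    (h : ∀ t ∈ Set.Icc (-M) M, |f t - p.eval t| ≤ c) :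
    ‖cfc f b - Polynomial.aeval b p‖ ≤ c := by
  rw [← cfc_polynomial p b, ← cfc_sub _ _ b]
  exact norm_cfc_le hc fun t ht => by
    simpa using h t (spectrum_subset_Icc hbM ht)

private lemma cfc_mem_closure_adjoin (a : A) (ha : IsSelfAdjoint a) {f : ℝ → ℝ}
    (hf : Continuous f) (hf0 : f 0 = 0) :
    cfc f a ∈
      closure ((NonUnitalStarAlgebra.adjoin ℂ {a} : NonUnitalStarSubalgebra ℂ A) : Set A) := by
  rw [Metric.mem_closure_iff]
  intro ε hε
  obtain ⟨p, hp⟩ := exists_polynomial_near_of_continuousOn (-‖a‖) ‖a‖ f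
    hf.continuousOn (ε/4) (by positivity)
  set q : ℝ[X] := p - Polynomial.C (p.eval 0) with hqdef
  have hq0 : q.coeff 0 = 0 := by
    simp [hqdef, Polynomial.coeff_sub, Polynomial.coeff_zero_eq_eval_zero]
  refine ⟨Polynomial.aeval a q, aeval_mem_adjoin a hq0, ?_⟩
  rw [dist_eq_norm]
  have h0mem : (0:ℝ) ∈ Set.Icc (-‖a‖) ‖a‖ := by
    constructor <;> simp [norm_nonneg a]
  have hp0 : |p.eval 0| < ε/4 := by simpa [hf0] using hp 0 h0mem
  have hbound : ∀ t ∈ Set.Icc (-‖a‖) ‖a‖, |f t - q.eval t| ≤ ε/2 := by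
    intro t ht
    have h1 := hp t ht
    have : f t - q.eval t = (f t - p.eval t) + p.eval 0 := by
      simp [hqdef]; ring
    rw [this]
    calc |(f t - p.eval t) + p.eval 0| ≤ |f t - p.eval t| + |p.eval 0| := abs_add_le _ _
    _ ≤ ε/2 := by rw [abs_sub_comm] at h1; linarith
  calc ‖cfc f a - Polynomial.aeval a q‖ ≤ ε/2 :=
        norm_cfc_sub_aeval_le ha hf q le_rfl (by positivity) hbound
  _ < ε := by linarith

private lemma commute_aeval {a b : A} (hb : Commute a b) (p : ℝ[X]) :
    Commute (Polynomial.aeval a p) b := by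
  rw [Polynomial.aeval_eq_sum_range]
  refine Commute.sum_left _ _ _ fun i _ => ?_
  exact (hb.pow_left i).smul_left _

private lemma commute_cfc {a b : A} (ha : IsSelfAdjoint a) (hb : Commute a b)
    {f : ℝ → ℝ} (hf : Continuous f) : Commute (cfc f a) b := by
  have key : ∀ ε > (0:ℝ), ‖cfc f a * b - b * cfc f a‖ ≤ ε * (2 * ‖b‖) := by
    intro ε hε
    obtain ⟨p, hp⟩ := exists_polynomial_near_of_continuousOn (-‖a‖) ‖a‖ f
      hf.continuousOn ε hε
    have hnear : ‖cfc f a - Polynomial.aeval a p‖ ≤ ε :=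
      norm_cfc_sub_aeval_le ha hf p le_rfl hε.le fun t ht => by
        rw [abs_sub_comm]; exact (hp t ht).le
    have hcomm := commute_aeval hb p
    set c := cfc f a
    set d := Polynomial.aeval a p
    have : c * b - b * c = (c - d) * b - b * (c - d) := by
      rw [sub_mul, mul_sub, hcomm.eq]; abel
    rw [this]
    calc ‖(c - d) * b - b * (c - d)‖ ≤ ‖(c-d) * b‖ + ‖b * (c-d)‖ := norm_sub_le _ _
    _ ≤ ‖c-d‖ * ‖b‖ + ‖b‖ * ‖c-d‖ := by
        gcongr <;> exact norm_mul_le _ _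
    _ ≤ ε * ‖b‖ + ‖b‖ * ε := by
        gcongr
    _ = ε * (2 * ‖b‖) := by ring
  have hz : ‖cfc f a * b - b * cfc f a‖ = 0 := by
    by_contra hne
    have hpos : 0 < ‖cfc f a * b - b * cfc f a‖ := lt_of_le_of_ne (norm_nonneg _) (Ne.symm hne)
    rcases le_or_gt ‖b‖ 0 with hb0 | hb0
    · have : b = 0 := by rwa [← norm_le_zero_iff]
      simp [this] at hpos
    · have := key (‖cfc f a * b - b * cfc f a‖ / (4 * ‖b‖)) (by positivity)
      set N := ‖cfc f a * b - b * cfc f a‖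
      have h2 : N / (4 * ‖b‖) * (2 * ‖b‖) = N / 2 := by
        field_simp
        ring
      rw [h2] at this
      linarith
  exact sub_eq_zero.mp (norm_eq_zero.mp hz)

private lemma mvn_of_close {p q : A} (hp : IsProjectionElem p) (hq : IsProjectionElem q)
    (hpq : ‖p - q‖ < 1) : MvNEquiv p q := by
  set d := p - q with hd
  have hdsa : IsSelfAdjoint d := by
    rw [IsSelfAdjoint, star_sub, hp.1, hq.1]
  set h := 1 - d * d with hh
  have hhsa : IsSelfAdjoint h := by
    rw [IsSelfAdjoint, star_sub, star_one, star_mul, hdsa.star_eq]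
  set c := 1 - ‖d‖ * ‖d‖ with hc
  have hcpos : 0 < c := by nlinarith [norm_nonneg d]
  have hform : h = cfc (fun s : ℝ => 1 - s * s) d := by
    rw [cfc_sub _ _ d, cfc_const_one ℝ d, cfc_mul _ _ d, cfc_id' ℝ d]
  have hspech : spectrum ℝ h ⊆ Set.Ici c := by
    rw [hform, cfc_map_spectrum _ d]
    rintro t ⟨s, hs, rfl⟩
    have habs : |s| ≤ ‖d‖ := by simpa using spectrum.norm_le_norm_of_mem hs
    simp only [Set.mem_Ici, hc]
    nlinarith [abs_nonneg s, sq_abs s, norm_nonneg d]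
  have hcmax : ∀ t : ℝ, 0 < max t c := fun t => lt_max_of_lt_right hcpos
  have hspec_max : ∀ t ∈ spectrum ℝ h, max t c = t := fun t ht => max_eq_left (hspech ht)
  set g : ℝ → ℝ := fun t => (Real.sqrt (max t c))⁻¹ with hg
  have hgcont : Continuous g := by
    apply Continuous.inv₀
    · exact Real.continuous_sqrt.comp (continuous_id.max continuous_const)
    · intro t
      exact (Real.sqrt_pos.mpr (hcmax t)).ne'
  set w := cfc g h with hwdef
  have hwsa : IsSelfAdjoint w := cfc_predicate g h
  have hwh : w * (h * w) = 1 := by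
    have e1 : cfc (fun t : ℝ => t * g t) h = h * w := by
      rw [cfc_mul (fun t : ℝ => t) g h (continuous_id'.continuousOn) hgcont.continuousOn,
        cfc_id' ℝ h]
    have e2 : cfc (fun t : ℝ => g t * (t * g t)) h = w * (h * w) := by
      rw [cfc_mul g (fun t : ℝ => t * g t) h hgcont.continuousOn
        ((continuous_id'.mul hgcont).continuousOn), e1]
    rw [← e2, ← cfc_const_one ℝ h hhsa]
    apply cfc_congr
    intro t ht
    have h1 : max t c = t := hspec_max t ht
    have h2 : (0:ℝ) < t := h1 ▸ hcmax t
    show g t * (t * g t) = 1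
    have h3 : Real.sqrt t ≠ 0 := (Real.sqrt_pos.mpr h2).ne'
    simp only [hg, h1]
    field_simp
    rw [Real.sq_sqrt h2.le]
  set hi : A := cfc (fun t : ℝ => (max t c)⁻¹) h with hidef
  have hicont : Continuous (fun t : ℝ => (max t c)⁻¹) := by
    apply Continuous.inv₀ (continuous_id.max continuous_const)
    exact fun t => (hcmax t).ne'
  have hww : w * w = hi := by
    rw [hwdef, hidef, ← cfc_mul g g h hgcont.continuousOn hgcont.continuousOn]
    apply cfc_congr
    intro t ht
    show g t * g t = (max t c)⁻¹
    simp only [hg]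
    rw [← mul_inv, Real.mul_self_sqrt (hcmax t).le]
  have hhi : h * hi = 1 := by
    have e1 : cfc (fun t : ℝ => t * (max t c)⁻¹) h = h * hi := by
      rw [cfc_mul (fun t : ℝ => t) (fun t : ℝ => (max t c)⁻¹) h continuous_id'.continuousOn
        hicont.continuousOn, cfc_id' ℝ h, hidef]
    rw [← e1, ← cfc_const_one ℝ h hhsa]
    apply cfc_congr
    intro t ht
    have h1 : max t c = t := hspec_max t ht
    have h2 : (0:ℝ) < t := h1 ▸ hcmax t
    show t * (max t c)⁻¹ = 1
    rw [h1]
    exact mul_inv_cancel₀ h2.ne'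
  have hih : hi * h = 1 := by
    have e1 : cfc (fun t : ℝ => (max t c)⁻¹ * t) h = hi * h := by
      rw [cfc_mul (fun t : ℝ => (max t c)⁻¹) (fun t : ℝ => t) h hicont.continuousOn
        continuous_id'.continuousOn, cfc_id' ℝ h, hidef]
    rw [← e1, ← cfc_const_one ℝ h hhsa]
    apply cfc_congr
    intro t ht
    have h1 : max t c = t := hspec_max t ht
    have h2 : (0:ℝ) < t := h1 ▸ hcmax t
    show (max t c)⁻¹ * t = 1
    rw [h1]
    exact inv_mul_cancel₀ h2.ne'
  set z := q * p + (1 - q) * (1 - p) with hz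
  have hzstar : star z = p * q + (1 - p) * (1 - q) := by
    simp only [hz, star_add, star_mul, star_sub, star_one, hp.1, hq.1]
  have hk1 : star z * z = h := by
    rw [hzstar, hz, key_alg hp.2 hq.2, hh, hd]
  have hk2 : z * star z = h := by
    rw [hzstar, hz, key_alg hq.2 hp.2, hh, hd]
    congr 1
    rw [show q - p = -(p - q) from (neg_sub p q).symm, neg_mul_neg]
  have hph : Commute h p := by
    have hdd : Commute (d * d) p := by
      show d * d * p = p * (d * d)
      rw [hd]
      exact (comm_alg hp.2 hq.2).symm
    rw [hh]
    exact (Commute.one_left p).sub_left hdd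
  have hpw : Commute w p := commute_cfc hhsa hph hgcont
  have hlinv : hi * star z * z = 1 := by rw [mul_assoc, hk1, hih]
  have hrinv : z * (star z * hi) = 1 := by rw [← mul_assoc, hk2, hhi]
  have heq : hi * star z = star z * hi := by
    calc hi * star z = hi * star z * (z * (star z * hi)) := by rw [hrinv, mul_one]
    _ = (hi * star z * z) * (star z * hi) := by rw [← mul_assoc]
    _ = star z * hi := by rw [hlinv, one_mul]
  set u := z * w with hu
  have huu : star u * u = 1 := by
    rw [hu, star_mul, hwsa.star_eq]
    have : w * star z * (z * w) = w * (h * w) := by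
      rw [← hk1]; noncomm_ring
    rw [this, hwh]
  have huu' : u * star u = 1 := by
    rw [hu, star_mul, hwsa.star_eq]
    have : z * w * (w * star z) = z * (hi * star z) := by
      rw [← hww]; noncomm_ring
    rw [this, heq, hrinv]
  have hzp : z * p = q * z := zp_alg hp.2 hq.2
  have hup : u * p = q * u := by
    rw [hu, mul_assoc, hpw.eq, ← mul_assoc, hzp, mul_assoc]
  refine ⟨u * p, ?_, ?_⟩
  · rw [star_mul, hp.1]
    have : p * star u * (u * p) = p * (star u * u) * p := by noncomm_ring
    rw [this, huu, mul_one, hp.2]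
  · rw [star_mul, hp.1]
    have : u * p * (p * star u) = u * (p * p) * star u := by noncomm_ring
    rw [this, hp.2, hup, mul_assoc, huu', mul_one]

variable [PartialOrder A] [StarOrderedRing A]

private lemma supp_eq_cfc {a e : A} (ha : 0 ≤ a) (hsupp : IsSupportProjection e a)
    {f : ℝ → ℝ} (hf : Continuous f) (hf0 : f 0 = 0)
    (hf1 : ∀ t ∈ spectrum ℝ a, t ≠ 0 → f t = 1) : e = cfc f a := by
  have hasa : IsSelfAdjoint a := ha.isSelfAdjoint
  set c := cfc f a with hcdef
  have hcsa : IsSelfAdjoint c := cfc_predicate f a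
  have hca : c * a = a := by
    have e1 : cfc (fun t : ℝ => f t * t) a = c * a := by
      rw [cfc_mul f (fun t : ℝ => t) a hf.continuousOn continuous_id'.continuousOn,
        cfc_id' ℝ a, hcdef]
    have e2 : cfc (fun t : ℝ => f t * t) a = cfc (fun t : ℝ => t) a := by
      apply cfc_congr
      intro t ht
      show f t * t = t
      rcases eq_or_ne t 0 with rfl | hne
      · ring
      · rw [hf1 t ht hne, one_mul]
    rw [← e1, e2, cfc_id' ℝ a]
  have hac : a * c = a := by
    have := congrArg star hca
    rwa [star_mul, hcsa.star_eq, hasa.star_eq] at this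
  obtain ⟨hproj, hea, hmem⟩ := hsupp
  have hesa : star e = e := hproj.1
  have hae : a * e = a := by
    have := congrArg star hea
    rwa [star_mul, hesa, hasa.star_eq] at this
  have hcmem : c ∈ closure
      ((NonUnitalStarAlgebra.adjoin ℂ {a} : NonUnitalStarSubalgebra ℂ A) : Set A) :=
    cfc_mem_closure_adjoin a hasa hf hf0
  have h1 := unit_on_closure hesa hea hae c hcmem
  have h2 := unit_on_closure hcsa.star_eq hca hac e hmem
  -- h1.1 : e * c = c, h2.2 : e * c = e
  rw [← h2.2, h1.1]

private lemma not_mem_spectrum_of_close {b b' : A} (hb : IsSelfAdjoint b)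
    {ε t : ℝ} (hbb : ‖b' - b‖ < ε) (h : ∀ s ∈ spectrum ℝ b, ε ≤ |t - s|) :
    t ∉ spectrum ℝ b' := by
  intro ht
  have hε : 0 < ε := lt_of_le_of_lt (norm_nonneg _) hbb
  have hform : algebraMap ℝ A t - b = cfc (fun s : ℝ => t - s) b := by
    rw [cfc_sub (fun _ : ℝ => t) (fun s : ℝ => s) b, cfc_const t b, cfc_id' ℝ b]
  have hne : ∀ s ∈ spectrum ℝ b, t - s ≠ 0 := by
    intro s hs h0
    have := h s hs
    rw [h0, abs_zero] at this
    linarith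
  have hrcont : ContinuousOn (fun s : ℝ => (t - s)⁻¹) (spectrum ℝ b) := by
    apply ContinuousOn.inv₀ (by fun_prop)
    exact hne
  set r := cfc (fun s : ℝ => (t - s)⁻¹) b with hrdef
  have hru : r * (algebraMap ℝ A t - b) = 1 := by
    rw [hform, hrdef, ← cfc_mul _ _ b hrcont (by fun_prop), ← cfc_const_one ℝ b hb]
    apply cfc_congr
    intro s hs
    show (t - s)⁻¹ * (t - s) = 1
    exact inv_mul_cancel₀ (hne s hs)
  have hur : (algebraMap ℝ A t - b) * r = 1 := by
    rw [hform, hrdef, ← cfc_mul _ _ b (by fun_prop) hrcont, ← cfc_const_one ℝ b hb]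
    apply cfc_congr
    intro s hs
    show (t - s) * (t - s)⁻¹ = 1
    exact mul_inv_cancel₀ (hne s hs)
  have hrnorm : ‖r‖ ≤ ε⁻¹ := by
    apply norm_cfc_le (by positivity)
    intro s hs
    rw [Real.norm_eq_abs, abs_inv]
    exact inv_anti₀ hε (h s hs)
  have hsmall : ‖r * (b' - b)‖ < 1 := by
    calc ‖r * (b' - b)‖ ≤ ‖r‖ * ‖b' - b‖ := norm_mul_le _ _
    _ ≤ ε⁻¹ * ‖b' - b‖ := by gcongr
    _ < ε⁻¹ * ε := by gcongr
    _ = 1 := inv_mul_cancel₀ hε.ne'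
  have hfact : algebraMap ℝ A t - b' = (algebraMap ℝ A t - b) * (1 - r * (b' - b)) := by
    rw [mul_sub, mul_one, ← mul_assoc, hur, one_mul]
    abel
  have hunit : IsUnit (algebraMap ℝ A t - b') := by
    rw [hfact]
    exact (Units.mk (algebraMap ℝ A t - b) r hur hru).isUnit.mul (Units.oneSub _ hsmall).isUnit
  exact spectrum.mem_iff.mp ht hunit

private lemma continuous_cfc_comp {X : Type*} [TopologicalSpace X]
    {c : X → A} (hc : Continuous c) (hsa : ∀ x, IsSelfAdjoint (c x))
    {f : ℝ → ℝ} (hf : Continuous f) : Continuous fun x => cfc f (c x) := by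
  rw [continuous_iff_continuousAt]
  intro x₀
  rw [ContinuousAt, Metric.tendsto_nhds]
  intro ε hε
  set M := ‖c x₀‖ + 1 with hM
  obtain ⟨p, hp⟩ := exists_polynomial_near_of_continuousOn (-M) M f
    hf.continuousOn (ε/4) (by positivity)
  have E1 : ∀ᶠ y in nhds x₀, ‖c y - c x₀‖ < 1 := by
    have := Metric.tendsto_nhds.mp (hc.tendsto x₀) 1 one_pos
    simpa [dist_eq_norm] using this
  have E2 : ∀ᶠ y in nhds x₀,
      ‖Polynomial.aeval (c y) p - Polynomial.aeval (c x₀) p‖ < ε/4 := by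
    have := Metric.tendsto_nhds.mp (((p.continuous_aeval).comp hc).tendsto x₀)
      (ε/4) (by positivity)
    simpa [dist_eq_norm] using this
  filter_upwards [E1, E2] with y hy1 hy2
  rw [dist_eq_norm]
  have hyM : ‖c y‖ ≤ M := by
    have := norm_sub_norm_le (c y) (c x₀)
    rw [hM]
    linarith
  have hx0M : ‖c x₀‖ ≤ M := by rw [hM]; linarith
  have habs : ∀ t ∈ Set.Icc (-M) M, |f t - p.eval t| ≤ ε/4 := fun t ht => by
    rw [abs_sub_comm]; exact (hp t ht).le
  have e1 : ‖cfc f (c y) - Polynomial.aeval (c y) p‖ ≤ ε/4 :=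
    norm_cfc_sub_aeval_le (hsa y) hf p hyM (by positivity) habs
  have e2 : ‖cfc f (c x₀) - Polynomial.aeval (c x₀) p‖ ≤ ε/4 :=
    norm_cfc_sub_aeval_le (hsa x₀) hf p hx0M (by positivity) habs
  calc ‖cfc f (c y) - cfc f (c x₀)‖
      = ‖(cfc f (c y) - Polynomial.aeval (c y) p)
          + (Polynomial.aeval (c y) p - Polynomial.aeval (c x₀) p)
          + (Polynomial.aeval (c x₀) p - cfc f (c x₀))‖ := by congr 1; abel
  _ ≤ ‖cfc f (c y) - Polynomial.aeval (c y) p‖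
        + ‖Polynomial.aeval (c y) p - Polynomial.aeval (c x₀) p‖
        + ‖Polynomial.aeval (c x₀) p - cfc f (c x₀)‖ := norm_add₃_le
  _ < ε := by
      rw [norm_sub_rev (Polynomial.aeval (c x₀) p)] at *
      linarith

end CStarAux

/-- If `a` is a positive element of `C(X, A)` (`X` compact Hausdorff, `A` separable unital
and finite for projections) whose values have spectrum in `{0} ∪ [δ, ∞)` and whose support
projections `P x = χ(a(x))` are pairwise Murray–von Neumann equivalent, then `P` is
continuous and `a` is Cuntz equivalent to `P` in `C(X, A)`. -/
theorem stmt_4 {X : Type*} [TopologicalSpace X] [CompactSpace X] [T2Space X]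
    {A : Type*} [CStarAlgebra A] [PartialOrder A] [StarOrderedRing A]
    [TopologicalSpace.SeparableSpace A]
    (hfin : FiniteForProjections A)
    (a : C(X, A)) (ha : ∀ x, 0 ≤ a x)
    (hspec : ∀ x, ∃ δ > (0 : ℝ), spectrum ℝ (a x) ⊆ {0} ∪ Set.Ici δ)
    (P : X → A) (hP : ∀ x, IsSupportProjection (P x) (a x))
    (hMvN : ∀ x y, MvNEquiv (P x) (P y)) :
    Continuous P ∧
      (∀ δ > (0 : ℝ), ∃ s : C(X, A), ∀ x, ‖a x - star (s x) * P x * s x‖ < δ) ∧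
      (∀ δ > (0 : ℝ), ∃ s : C(X, A), ∀ x, ‖P x - star (s x) * a x * s x‖ < δ) := by
  obtain hA | hA := subsingleton_or_nontrivial A
  · refine ⟨?_, fun δ hδ => ⟨a, fun x => ?_⟩, fun δ hδ => ⟨a, fun x => ?_⟩⟩
    · have : P = fun _ => 0 := funext fun _ => Subsingleton.elim _ _
      rw [this]; exact continuous_const
    · rw [Subsingleton.elim (a x - star (a x) * P x * a x) 0, norm_zero]; exact hδ
    · rw [Subsingleton.elim (P x - star (a x) * a x * a x) 0, norm_zero]; exact hδ
  obtain hX | hX := isEmpty_or_nonempty X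
  · exact ⟨continuous_iff_continuousAt.mpr fun x => (IsEmpty.false x).elim,
      fun δ hδ => ⟨a, fun x => (IsEmpty.false x).elim⟩,
      fun δ hδ => ⟨a, fun x => (IsEmpty.false x).elim⟩⟩
  have hsa : ∀ x, IsSelfAdjoint (a x) := fun x => (ha x).isSelfAdjoint
  have hspec0 : ∀ x, ∀ t ∈ spectrum ℝ (a x), 0 ≤ t := fun x => by
    rw [← StarOrderedRing.nonneg_iff_spectrum_nonneg (a x) (hsa x)]; exact ha x
  -- Local uniform spectral gap.
  have key : ∀ x₀ : X, ∃ δ₀ > (0:ℝ),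
      ∀ᶠ y in nhds x₀, spectrum ℝ (a y) ⊆ {0} ∪ Set.Ici δ₀ := by
    intro x₀
    obtain ⟨δ, hδpos, hsp⟩ := hspec x₀
    set f : ℝ → ℝ := fun t => min 1 (max 0 ((4/δ)*t - 1)) with hfdef
    have hfcont : Continuous f := by
      apply Continuous.min continuous_const
      exact Continuous.max continuous_const (by fun_prop)
    have hf0 : f 0 = 0 := by norm_num [hfdef]
    have hf_le : ∀ t, t ≤ δ/4 → f t = 0 := by
      intro t h
      have hv : (4/δ)*t - 1 ≤ 0 := by
        have : (4/δ)*t ≤ 1 := by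
          rw [div_mul_eq_mul_div, div_le_one hδpos]
          linarith
        linarith
      simp only [hfdef]
      rw [max_eq_left hv, min_eq_right zero_le_one]
    have hf_ge : ∀ t, δ/2 ≤ t → f t = 1 := by
      intro t h
      have hv : (1:ℝ) ≤ (4/δ)*t - 1 := by
        have : (2:ℝ) ≤ (4/δ)*t := by
          rw [div_mul_eq_mul_div, le_div_iff₀ hδpos]
          linarith
        linarith
      simp only [hfdef]
      exact min_eq_left (le_max_of_le_right hv)
    have hf1 : ∀ t ∈ spectrum ℝ (a x₀), t ≠ 0 → f t = 1 := by
      intro t ht hne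
      rcases hsp ht with h0 | h1
      · exact absurd h0 hne
      · exact hf_ge t (by have := Set.mem_Ici.mp h1; linarith)
    have hPx₀ : P x₀ = cfc f (a x₀) := supp_eq_cfc (ha x₀) (hP x₀) hfcont hf0 hf1
    have hcfc_cont : Continuous fun y => cfc f (a y) :=
      continuous_cfc_comp a.continuous hsa hfcont
    refine ⟨δ/2, by positivity, ?_⟩
    have E1 : ∀ᶠ y in nhds x₀, ‖a y - a x₀‖ < δ/8 := by
      have := Metric.tendsto_nhds.mp (a.continuous.tendsto x₀) (δ/8) (by positivity)
      simpa [dist_eq_norm] using this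
    have E2 : ∀ᶠ y in nhds x₀, ‖cfc f (a y) - cfc f (a x₀)‖ < 1 := by
      have := Metric.tendsto_nhds.mp (hcfc_cont.tendsto x₀) 1 one_pos
      simpa [dist_eq_norm] using this
    filter_upwards [E1, E2] with y hy1 hy2
    have havoid : ∀ t ∈ spectrum ℝ (a y), t ≤ δ/8 ∨ 7*(δ/8) ≤ t := by
      intro t ht
      by_contra hcon
      push_neg at hcon
      obtain ⟨h1, h2⟩ := hcon
      refine not_mem_spectrum_of_close (hsa x₀) hy1 ?_ ht
      intro s hs
      rcases hsp hs with h0 | hs1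
      · have : s = 0 := h0
        rw [this, sub_zero, abs_of_pos (by linarith)]
        linarith
      · have hδs : δ ≤ s := Set.mem_Ici.mp hs1
        rw [abs_sub_comm, abs_of_nonneg (by linarith)]
        linarith
    set e := cfc f (a y) with hedef
    have hesa : IsSelfAdjoint e := cfc_predicate f (a y)
    have heidem : e * e = e := by
      rw [hedef, ← cfc_mul f f (a y) hfcont.continuousOn hfcont.continuousOn]
      apply cfc_congr
      intro t ht
      show f t * f t = f t
      rcases havoid t ht with h | h
      · rw [hf_le t (by linarith)]; ring
      · rw [hf_ge t (by linarith)]; ring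
    have heproj : IsProjectionElem e := ⟨hesa.star_eq, heidem⟩
    obtain ⟨⟨hPs, hPidem⟩, hPa, hPmem⟩ := hP y
    have hPay : a y * P y = a y := by
      have := congrArg star hPa
      rwa [star_mul, hPs, (hsa y).star_eq] at this
    have habs := unit_on_closure hPs hPa hPay e
      (cfc_mem_closure_adjoin (a y) (hsa y) hfcont hf0)
    have hrproj : (P y - e) * (P y - e) = P y - e := by
      rw [sub_mul, mul_sub, mul_sub, hPidem, habs.1, habs.2, heidem]
      abel
    have hrsa : star (P y - e) = P y - e := by rw [star_sub, hPs, hesa.star_eq]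
    have hle : e ≤ P y := by
      rw [← sub_nonneg]
      calc (0:A) ≤ star (P y - e) * (P y - e) := star_mul_self_nonneg _
      _ = P y - e := by rw [hrsa, hrproj]
    have hclose : ‖e - P x₀‖ < 1 := by rw [hedef, hPx₀]; exact hy2
    have hmvn1 : MvNEquiv e (P x₀) := mvn_of_close heproj (hP x₀).1 hclose
    have hmvn : MvNEquiv e (P y) := by
      obtain ⟨v, hv1, hv2⟩ := hmvn1
      obtain ⟨w, hw1, hw2⟩ := hMvN x₀ y
      refine ⟨w * v, ?_, ?_⟩
      · calc star (w * v) * (w * v) = star v * (star w * w) * v := by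
              rw [star_mul]; noncomm_ring
        _ = star v * (v * star v) * v := by rw [hw1, ← hv2]
        _ = (star v * v) * (star v * v) := by noncomm_ring
        _ = e := by rw [hv1, heidem]
      · calc (w * v) * star (w * v) = w * (v * star v) * star w := by
              rw [star_mul]; noncomm_ring
        _ = w * (star w * w) * star w := by rw [hv2, ← hw1]
        _ = (w * star w) * (w * star w) := by noncomm_ring
        _ = P y := by rw [hw2, hPidem]
    have hePy : e = P y := hfin e (P y) heproj ⟨hPs, hPidem⟩ hle hmvn
    intro t ht
    rcases eq_or_ne t 0 with rfl | hne
    · exact Or.inl rfl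
    refine Or.inr (Set.mem_Ici.mpr ?_)
    have hz : cfc (fun s : ℝ => f s * s - s) (a y) = 0 := by
      rw [cfc_sub (fun s : ℝ => f s * s) (fun s : ℝ => s) (a y)
          ((hfcont.mul continuous_id').continuousOn) continuous_id'.continuousOn,
        cfc_mul f (fun s : ℝ => s) (a y) hfcont.continuousOn continuous_id'.continuousOn,
        cfc_id' ℝ (a y), ← hedef, hePy, hPa, sub_self]
    have hb := norm_apply_le_norm_cfc (fun s : ℝ => f s * s - s) (a y) ht
      (((hfcont.mul continuous_id').sub continuous_id').continuousOn) (hsa y)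
    rw [hz, norm_zero] at hb
    have hft : f t * t - t = 0 := by
      have : |f t * t - t| = 0 :=
        le_antisymm (by simpa using hb) (abs_nonneg _)
      exact abs_eq_zero.mp this
    have hftt : f t = 1 := by
      rw [sub_eq_zero] at hft
      exact mul_right_cancel₀ hne (by rw [hft, one_mul])
    by_contra hlt
    push_neg at hlt
    have hflt : f t < 1 := by
      have hv : (4/δ)*t - 1 < 1 := by
        have ht0 : 0 ≤ t := hspec0 y t ht
        have : (4/δ)*t < 2 := by
          rw [div_mul_eq_mul_div, div_lt_iff₀ hδpos]
          linarith
        linarith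
      calc f t ≤ max 0 ((4/δ)*t - 1) := min_le_right _ _
      _ < 1 := max_lt one_pos hv
    rw [hftt] at hflt
    exact lt_irrefl _ hflt
  -- Globalize the gap by compactness.
  choose δ₀ hδ₀pos hδ₀ev using key
  have hU : ∀ x ∈ (Set.univ : Set X),
      {y | spectrum ℝ (a y) ⊆ {0} ∪ Set.Ici (δ₀ x)} ∈ nhds x := fun x _ => hδ₀ev x
  obtain ⟨T, -, hT⟩ := isCompact_univ.elim_nhds_subcover _ hU
  have hTne : T.Nonempty := by
    obtain ⟨x⟩ := hX
    obtain ⟨z, hz, -⟩ := Set.mem_iUnion₂.mp (hT (Set.mem_univ x))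
    exact ⟨z, hz⟩
  set δm := T.inf' hTne δ₀ with hδm
  have hδmpos : 0 < δm := (Finset.lt_inf'_iff hTne).mpr fun z _ => hδ₀pos z
  have hgap : ∀ y, spectrum ℝ (a y) ⊆ {0} ∪ Set.Ici δm := by
    intro y t ht
    obtain ⟨z, hzT, hy⟩ := Set.mem_iUnion₂.mp (hT (Set.mem_univ y))
    rcases hy ht with h | h
    · exact Or.inl h
    · exact Or.inr (le_trans (Finset.inf'_le δ₀ hzT) h)
  -- The global support projection function.
  set F : ℝ → ℝ := fun t => min 1 (max 0 ((2/δm)*t - 1)) with hFdef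
  have hFcont : Continuous F := by
    apply Continuous.min continuous_const
    exact Continuous.max continuous_const (by fun_prop)
  have hF0 : F 0 = 0 := by norm_num [hFdef]
  have hF_ge : ∀ t, δm ≤ t → F t = 1 := by
    intro t h
    have hv : (1:ℝ) ≤ (2/δm)*t - 1 := by
      have : (2:ℝ) ≤ (2/δm)*t := by
        rw [div_mul_eq_mul_div, le_div_iff₀ hδmpos]
        linarith
      linarith
    simp only [hFdef]
    exact min_eq_left (le_max_of_le_right hv)
  have hPF : ∀ x, P x = cfc F (a x) := by
    intro x
    apply supp_eq_cfc (ha x) (hP x) hFcont hF0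
    intro t ht hne
    rcases hgap x ht with h0 | h1
    · exact absurd h0 hne
    · exact hF_ge t (Set.mem_Ici.mp h1)
  have hPcont : Continuous P := by
    have : P = fun x => cfc F (a x) := funext hPF
    rw [this]
    exact continuous_cfc_comp a.continuous hsa hFcont
  refine ⟨hPcont, ?_, ?_⟩
  -- Part 2 : a ≾ P
  · intro δ hδ
    set M := ‖a‖ + 1 with hMdef
    have hMpos : 0 < M := by positivity
    have hbM : ∀ x, ‖a x‖ ≤ M := fun x => le_trans (a.norm_coe_le_norm x) (by linarith)
    set C := 2 * Real.sqrt M + 1 with hC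
    have hCpos : 0 < C := by positivity
    set η := min 1 (δ / (2 * C)) with hη
    have hηpos : 0 < η := lt_min one_pos (by positivity)
    obtain ⟨p, hp⟩ := exists_polynomial_near_of_continuousOn (-M) M Real.sqrt
      Real.continuous_sqrt.continuousOn η hηpos
    refine ⟨⟨fun x => Polynomial.aeval (a x) p, (p.continuous_aeval).comp a.continuous⟩,
      fun x => ?_⟩
    simp only [ContinuousMap.coe_mk]
    have hpoly : Polynomial.aeval (a x) p = cfc p.eval (a x) := (cfc_polynomial p (a x)).symm
    have hstar : star (Polynomial.aeval (a x) p) = Polynomial.aeval (a x) p := by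
      rw [hpoly]
      exact (cfc_predicate p.eval (a x) : IsSelfAdjoint _).star_eq
    have hpcont : Continuous fun t : ℝ => p.eval t := p.continuous_aeval
    have e1 : cfc (fun t : ℝ => p.eval t * F t * p.eval t) (a x)
        = cfc p.eval (a x) * cfc F (a x) * cfc p.eval (a x) := by
      rw [cfc_mul (fun t : ℝ => p.eval t * F t) (fun t : ℝ => p.eval t) (a x)
          ((hpcont.mul hFcont).continuousOn) hpcont.continuousOn,
        cfc_mul (fun t : ℝ => p.eval t) F (a x) hpcont.continuousOn hFcont.continuousOn]
    have e2 : a x - cfc (fun t : ℝ => p.eval t * F t * p.eval t) (a x)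
        = cfc (fun t : ℝ => t - p.eval t * F t * p.eval t) (a x) := by
      rw [cfc_sub (fun t : ℝ => t) (fun t : ℝ => p.eval t * F t * p.eval t) (a x)
          continuous_id'.continuousOn (((hpcont.mul hFcont).mul hpcont).continuousOn),
        cfc_id' ℝ (a x) (hsa x)]
    rw [hstar, hpoly, hPF x, ← e1, e2]
    have hbound : ∀ t ∈ spectrum ℝ (a x), ‖t - p.eval t * F t * p.eval t‖ ≤ δ/2 := by
      intro t ht
      have htM : t ∈ Set.Icc (-M) M := spectrum_subset_Icc (hbM x) ht
      have ht0 : 0 ≤ t := hspec0 x t ht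
      rw [Real.norm_eq_abs]
      rcases hgap x ht with h0 | h1
      · have : t = 0 := h0
        subst this
        rw [hF0]
        simp only [mul_zero, zero_mul, mul_one, one_mul, zero_sub, sub_zero, abs_neg, abs_zero]
        positivity
      · have htδ : δm ≤ t := Set.mem_Ici.mp h1
        rw [hF_ge t htδ, mul_one]
        have hsq : Real.sqrt t * Real.sqrt t = t := Real.mul_self_sqrt ht0
        have hsple : Real.sqrt t ≤ Real.sqrt M := Real.sqrt_le_sqrt htM.2
        have hd : |Real.sqrt t - p.eval t| ≤ η := by
          rw [abs_sub_comm]; exact (hp t htM).le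
        have hη1 : η ≤ 1 := min_le_left _ _
        have hη2 : η ≤ δ / (2*C) := min_le_right _ _
        have hpabs : |p.eval t| ≤ Real.sqrt M + 1 := by
          have h3 := abs_sub_abs_le_abs_sub (p.eval t) (Real.sqrt t)
          rw [abs_sub_comm] at h3
          have h4 : |Real.sqrt t| = Real.sqrt t := abs_of_nonneg (Real.sqrt_nonneg t)
          linarith [hd, h3, h4.le, hsple]
        have hesum : |Real.sqrt t + p.eval t| ≤ C := by
          calc |Real.sqrt t + p.eval t| ≤ |Real.sqrt t| + |p.eval t| := abs_add_le _ _
          _ ≤ C := by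
              rw [abs_of_nonneg (Real.sqrt_nonneg t), hC]
              linarith
        have hfe : t - p.eval t * p.eval t
            = (Real.sqrt t - p.eval t) * (Real.sqrt t + p.eval t) := by
          nlinarith [hsq]
        rw [hfe, abs_mul]
        calc |Real.sqrt t - p.eval t| * |Real.sqrt t + p.eval t| ≤ η * C := by
              apply mul_le_mul hd hesum (abs_nonneg _) hηpos.le
        _ ≤ (δ / (2*C)) * C := by gcongr
        _ = δ/2 := by field_simp
    calc ‖cfc (fun t : ℝ => t - p.eval t * F t * p.eval t) (a x)‖ ≤ δ/2 :=
          norm_cfc_le (by positivity) hbound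
    _ < δ := by linarith
  -- Part 3 : P ≾ a
  · intro δ hδ
    set M := ‖a‖ + 1 with hMdef
    have hMpos : 0 < M := by positivity
    have hbM : ∀ x, ‖a x‖ ≤ M := fun x => le_trans (a.norm_coe_le_norm x) (by linarith)
    have hsδm : 0 < Real.sqrt δm := Real.sqrt_pos.mpr hδmpos
    set C := M * (2 * (Real.sqrt δm)⁻¹ + 1) + 1 with hC
    have hCpos : 0 < C := by positivity
    set η := min 1 (δ / (2 * C)) with hη
    have hηpos : 0 < η := lt_min one_pos (by positivity)
    set g : ℝ → ℝ := fun t => (Real.sqrt (max t δm))⁻¹ with hg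
    have hgcont : Continuous g := by
      apply Continuous.inv₀
      · exact Real.continuous_sqrt.comp (continuous_id.max continuous_const)
      · intro t
        exact (Real.sqrt_pos.mpr (lt_max_of_lt_right hδmpos)).ne'
    obtain ⟨p, hp⟩ := exists_polynomial_near_of_continuousOn (-M) M g
      hgcont.continuousOn η hηpos
    refine ⟨⟨fun x => Polynomial.aeval (a x) p, (p.continuous_aeval).comp a.continuous⟩,
      fun x => ?_⟩
    simp only [ContinuousMap.coe_mk]
    have hpoly : Polynomial.aeval (a x) p = cfc p.eval (a x) := (cfc_polynomial p (a x)).symm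
    have hstar : star (Polynomial.aeval (a x) p) = Polynomial.aeval (a x) p := by
      rw [hpoly]
      exact (cfc_predicate p.eval (a x) : IsSelfAdjoint _).star_eq
    have hpcont : Continuous fun t : ℝ => p.eval t := p.continuous_aeval
    have e1 : cfc (fun t : ℝ => p.eval t * t * p.eval t) (a x)
        = cfc p.eval (a x) * a x * cfc p.eval (a x) := by
      rw [cfc_mul (fun t : ℝ => p.eval t * t) (fun t : ℝ => p.eval t) (a x)
          ((hpcont.mul continuous_id').continuousOn) hpcont.continuousOn,
        cfc_mul (fun t : ℝ => p.eval t) (fun t : ℝ => t) (a x) hpcont.continuousOn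
          continuous_id'.continuousOn, cfc_id' ℝ (a x)]
    have e2 : P x - cfc (fun t : ℝ => p.eval t * t * p.eval t) (a x)
        = cfc (fun t : ℝ => F t - p.eval t * t * p.eval t) (a x) := by
      rw [cfc_sub F (fun t : ℝ => p.eval t * t * p.eval t) (a x)
          hFcont.continuousOn (((hpcont.mul continuous_id').mul hpcont).continuousOn),
        ← hPF x]
    rw [hstar, hpoly, ← e1, e2]
    have hbound : ∀ t ∈ spectrum ℝ (a x), ‖F t - p.eval t * t * p.eval t‖ ≤ δ/2 := by
      intro t ht
      have htM : t ∈ Set.Icc (-M) M := spectrum_subset_Icc (hbM x) ht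
      have ht0 : 0 ≤ t := hspec0 x t ht
      rw [Real.norm_eq_abs]
      rcases hgap x ht with h0 | h1
      · have : t = 0 := h0
        subst this
        rw [hF0]
        simp only [mul_zero, zero_mul, mul_one, one_mul, zero_sub, sub_zero, abs_neg, abs_zero]
        positivity
      · have htδ : δm ≤ t := Set.mem_Ici.mp h1
        have htpos : 0 < t := lt_of_lt_of_le hδmpos htδ
        rw [hF_ge t htδ]
        have hmax : max t δm = t := max_eq_left htδ
        have hsq : Real.sqrt t * Real.sqrt t = t := Real.mul_self_sqrt ht0
        have hstpos : 0 < Real.sqrt t := Real.sqrt_pos.mpr htpos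
        have hgt : g t = (Real.sqrt t)⁻¹ := by rw [hg]; simp only [hmax]
        have hone : (Real.sqrt t)⁻¹ * t * (Real.sqrt t)⁻¹ = 1 := by
          field_simp
          rw [Real.sq_sqrt ht0]
        have hd : |(Real.sqrt t)⁻¹ - p.eval t| ≤ η := by
          rw [abs_sub_comm, ← hgt]
          exact (hp t htM).le
        have hη1 : η ≤ 1 := min_le_left _ _
        have hη2 : η ≤ δ / (2*C) := min_le_right _ _
        have hginv : (Real.sqrt t)⁻¹ ≤ (Real.sqrt δm)⁻¹ := by
          apply inv_anti₀ hsδm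
          exact Real.sqrt_le_sqrt htδ
        have hpabs : |p.eval t| ≤ (Real.sqrt δm)⁻¹ + 1 := by
          have h3 := abs_sub_abs_le_abs_sub (p.eval t) ((Real.sqrt t)⁻¹)
          rw [abs_sub_comm] at h3
          have h4 : |(Real.sqrt t)⁻¹| = (Real.sqrt t)⁻¹ := abs_of_nonneg (by positivity)
          linarith [hd, h3, h4.le, hginv]
        have hesum : |(Real.sqrt t)⁻¹ + p.eval t| ≤ 2 * (Real.sqrt δm)⁻¹ + 1 := by
          calc |(Real.sqrt t)⁻¹ + p.eval t| ≤ |(Real.sqrt t)⁻¹| + |p.eval t| := abs_add_le _ _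
          _ ≤ 2 * (Real.sqrt δm)⁻¹ + 1 := by
              rw [abs_of_nonneg (by positivity : (0:ℝ) ≤ (Real.sqrt t)⁻¹)]
              linarith
        have hfe : (1:ℝ) - p.eval t * t * p.eval t
            = t * (((Real.sqrt t)⁻¹ - p.eval t) * ((Real.sqrt t)⁻¹ + p.eval t)) := by
          rw [← hone]; ring
        rw [hfe, abs_mul, abs_mul]
        have hMt : |t| ≤ M := by rw [abs_of_nonneg ht0]; exact htM.2
        calc |t| * (|(Real.sqrt t)⁻¹ - p.eval t| * |(Real.sqrt t)⁻¹ + p.eval t|)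
            ≤ M * (η * (2 * (Real.sqrt δm)⁻¹ + 1)) := by
              apply mul_le_mul hMt _ (by positivity) hMpos.le
              exact mul_le_mul hd hesum (abs_nonneg _) hηpos.le
        _ = η * (M * (2 * (Real.sqrt δm)⁻¹ + 1)) := by ring
        _ ≤ η * C := by
            apply mul_le_mul_of_nonneg_left _ hηpos.le
            rw [hC]; linarith
        _ ≤ (δ / (2*C)) * C := by gcongr
        _ = δ/2 := by field_simp
    calc ‖cfc (fun t : ℝ => F t - p.eval t * t * p.eval t) (a x)‖ ≤ δ/2 :=
          norm_cfc_le (by positivity) hbound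
    _ < δ := by linarith
end

section
/- Let E be a Hausdorff locally convex real topological vector space and K ⊆ E a nonempty compact convex subset. Assume: (a) every lower semicontinuous affine function f : K → ℝ is the pointwise supremum of the continuous affine functions g : K → ℝ with g ≤ f; (b) whenever f : K → ℝ is lower semicontinuous affine and g₁, …, g_k : K → ℝ are finitely many continuous affine functions with g_i ≤ f for all i, there exists a continuous affine h : K → ℝ with g_i ≤ h ≤ f for all i; and (c) the continuous affine functions K → ℝ with pointwise order satisfy the Riesz interpolation property. (Conditions (a)–(c) hold whenever K is a Choquet simplex, by Edwards' separation theorem.) Then the set of lower semicontinuous affine functions K → ℝ, partially ordered pointwise, has the Riesz interpolation property: whenever lower semicontinuous affine functions satisfy a₁, a₂ ≤ c₁, c₂, there exists a lower semicontinuous affine function b with a₁, a₂ ≤ b ≤ c₁, c₂. -/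
/-- A real-valued function on a convex set `K` is affine if it respects convex
combinations. -/
def AffineOn {E : Type*} [AddCommGroup E] [Module ℝ E] {K : Set E} (hK : Convex ℝ K)
    (f : K → ℝ) : Prop :=
  ∀ (x y : K) (t : ℝ) (ht : 0 ≤ t) (ht' : t ≤ 1),
    f ⟨t • (x : E) + (1 - t) • (y : E),
        hK x.2 y.2 ht (by linarith) (by ring)⟩ = t * f x + (1 - t) * f y

/-- If `K` is a nonempty compact convex subset of a Hausdorff locally convex real
topological vector space satisfying conditions (a), (b), (c) (which hold for Choquet
simplices by Edwards' separation theorem), then the lower semicontinuous affine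
functions `K → ℝ` with the pointwise order have the Riesz interpolation property. -/
theorem stmt_9 {E : Type*} [AddCommGroup E] [Module ℝ E] [TopologicalSpace E]
    [IsTopologicalAddGroup E] [ContinuousSMul ℝ E] [LocallyConvexSpace ℝ E] [T2Space E]
    (K : Set E) (hne : K.Nonempty) (hcpt : IsCompact K) (hconv : Convex ℝ K)
    -- (a) every lower semicontinuous affine function is the pointwise supremum of the
    -- continuous affine functions below it
    (hsup : ∀ f : K → ℝ, LowerSemicontinuous f → AffineOn hconv f → ∀ x : K,
      IsLUB {r : ℝ | ∃ g : K → ℝ, Continuous g ∧ AffineOn hconv g ∧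
        (∀ z, g z ≤ f z) ∧ r = g x} (f x))
    -- (b) finitely many continuous affine functions below a lower semicontinuous affine
    -- function admit a continuous affine function interpolating between them
    (hdom : ∀ f : K → ℝ, LowerSemicontinuous f → AffineOn hconv f →
      ∀ (k : ℕ) (g : Fin k → K → ℝ),
        (∀ i, Continuous (g i) ∧ AffineOn hconv (g i) ∧ ∀ z, g i z ≤ f z) →
        ∃ h : K → ℝ, Continuous h ∧ AffineOn hconv h ∧
          (∀ i z, g i z ≤ h z) ∧ ∀ z, h z ≤ f z)
    -- (c) the continuous affine functions have Riesz interpolation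
    (hriesz : ∀ a₁ a₂ c₁ c₂ : K → ℝ,
      Continuous a₁ → AffineOn hconv a₁ → Continuous a₂ → AffineOn hconv a₂ →
      Continuous c₁ → AffineOn hconv c₁ → Continuous c₂ → AffineOn hconv c₂ →
      (∀ z, a₁ z ≤ c₁ z) → (∀ z, a₁ z ≤ c₂ z) → (∀ z, a₂ z ≤ c₁ z) → (∀ z, a₂ z ≤ c₂ z) →
      ∃ b : K → ℝ, Continuous b ∧ AffineOn hconv b ∧
        (∀ z, a₁ z ≤ b z) ∧ (∀ z, a₂ z ≤ b z) ∧ (∀ z, b z ≤ c₁ z) ∧ (∀ z, b z ≤ c₂ z))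
    -- Riesz interpolation for lower semicontinuous affine functions
    (a₁ a₂ c₁ c₂ : K → ℝ)
    (ha₁ : LowerSemicontinuous a₁) (ha₁' : AffineOn hconv a₁)
    (ha₂ : LowerSemicontinuous a₂) (ha₂' : AffineOn hconv a₂)
    (hc₁ : LowerSemicontinuous c₁) (hc₁' : AffineOn hconv c₁)
    (hc₂ : LowerSemicontinuous c₂) (hc₂' : AffineOn hconv c₂)
    (h11 : ∀ z, a₁ z ≤ c₁ z) (h12 : ∀ z, a₁ z ≤ c₂ z)
    (h21 : ∀ z, a₂ z ≤ c₁ z) (h22 : ∀ z, a₂ z ≤ c₂ z) :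
    ∃ b : K → ℝ, LowerSemicontinuous b ∧ AffineOn hconv b ∧
      (∀ z, a₁ z ≤ b z) ∧ (∀ z, a₂ z ≤ b z) ∧ (∀ z, b z ≤ c₁ z) ∧ (∀ z, b z ≤ c₂ z) := by
  classical
  -- the family of continuous affine functions below both c₁ and c₂
  set D : Set (K → ℝ) :=
    {h | Continuous h ∧ AffineOn hconv h ∧ (∀ z, h z ≤ c₁ z) ∧ (∀ z, h z ≤ c₂ z)} with hD
  -- D is nonempty
  obtain ⟨x₀, hx₀⟩ := hne
  obtain ⟨r, hr, -⟩ := (hsup a₁ ha₁ ha₁' ⟨x₀, hx₀⟩).exists_between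
    (show a₁ ⟨x₀, hx₀⟩ - 1 < a₁ ⟨x₀, hx₀⟩ by linarith)
  obtain ⟨g₀, hg₀c, hg₀a, hg₀le, -⟩ := hr
  have hDne : D.Nonempty :=
    ⟨g₀, hg₀c, hg₀a, fun z => (hg₀le z).trans (h11 z), fun z => (hg₀le z).trans (h12 z)⟩
  haveI : Nonempty D := hDne.to_subtype
  -- D is upward directed
  have hdir : ∀ h₁ ∈ D, ∀ h₂ ∈ D, ∃ h ∈ D, (∀ z, h₁ z ≤ h z) ∧ (∀ z, h₂ z ≤ h z) := by
    intro h₁ hh₁ h₂ hh₂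
    obtain ⟨hh₁c, hh₁a, hh₁1, hh₁2⟩ := hh₁
    obtain ⟨hh₂c, hh₂a, hh₂1, hh₂2⟩ := hh₂
    obtain ⟨p₁, hp₁c, hp₁a, hp₁ge, hp₁le⟩ := hdom c₁ hc₁ hc₁' 2 ![h₁, h₂] (by
      intro i
      fin_cases i
      · exact ⟨hh₁c, hh₁a, hh₁1⟩
      · exact ⟨hh₂c, hh₂a, hh₂1⟩)
    obtain ⟨p₂, hp₂c, hp₂a, hp₂ge, hp₂le⟩ := hdom c₂ hc₂ hc₂' 2 ![h₁, h₂] (by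
      intro i
      fin_cases i
      · exact ⟨hh₁c, hh₁a, hh₁2⟩
      · exact ⟨hh₂c, hh₂a, hh₂2⟩)
    obtain ⟨q, hqc, hqa, hq1, hq2, hqp₁, hqp₂⟩ := hriesz h₁ h₂ p₁ p₂
      hh₁c hh₁a hh₂c hh₂a hp₁c hp₁a hp₂c hp₂a
      (hp₁ge 0) (hp₂ge 0) (hp₁ge 1) (hp₂ge 1)
    exact ⟨q, ⟨hqc, hqa, fun z => (hqp₁ z).trans (hp₁le z),
      fun z => (hqp₂ z).trans (hp₂le z)⟩, hq1, hq2⟩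
  -- the candidate
  set b : K → ℝ := fun x => ⨆ h : D, (h : K → ℝ) x with hb
  have hbdd : ∀ x : K, BddAbove (Set.range fun h : D => (h : K → ℝ) x) := by
    intro x
    refine ⟨c₁ x, ?_⟩
    rintro r ⟨h, rfl⟩
    exact h.2.2.2.1 x
  have hle : ∀ h ∈ D, ∀ z, h z ≤ b z := by
    intro h hh z
    exact le_ciSup (hbdd z) ⟨h, hh⟩
  have hbc₁ : ∀ z, b z ≤ c₁ z := fun z => ciSup_le fun h => h.2.2.2.1 z
  have hbc₂ : ∀ z, b z ≤ c₂ z := fun z => ciSup_le fun h => h.2.2.2.2 z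
  -- b dominates a₁ and a₂
  have hba : ∀ (a : K → ℝ), LowerSemicontinuous a → AffineOn hconv a →
      (∀ z, a z ≤ c₁ z) → (∀ z, a z ≤ c₂ z) → ∀ z, a z ≤ b z := by
    intro a hl hla hac₁ hac₂ z
    refine (hsup a hl hla z).2 ?_
    rintro r ⟨g, hgc, hga, hgle, rfl⟩
    exact hle g ⟨hgc, hga, fun w => (hgle w).trans (hac₁ w),
      fun w => (hgle w).trans (hac₂ w)⟩ z
  -- b is lower semicontinuous
  have hlsc : LowerSemicontinuous b := by
    intro x y hy
    obtain ⟨h, hyh⟩ := exists_lt_of_lt_ciSup hy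
    have : ∀ᶠ x' in nhds x, y < (h : K → ℝ) x' :=
      (h.2.1.continuousAt (x := x)).eventually_const_lt hyh
    filter_upwards [this] with x' hx'
    exact hx'.trans_le (hle h h.2 x')
  -- b is affine
  have haff : AffineOn hconv b := by
    intro x y t ht ht'
    set pt : K := ⟨t • (x : E) + (1 - t) • (y : E),
      hconv x.2 y.2 ht (by linarith) (by ring)⟩ with hpt
    refine le_antisymm (ciSup_le fun h => ?_) ?_
    · have := h.2.2.1 x y t ht ht'
      rw [show ((h : K → ℝ) pt = t * (h : K → ℝ) x + (1 - t) * (h : K → ℝ) y) from this]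
      have h1 : t * (h : K → ℝ) x ≤ t * b x :=
        mul_le_mul_of_nonneg_left (hle h h.2 x) ht
      have h2 : (1 - t) * (h : K → ℝ) y ≤ (1 - t) * b y :=
        mul_le_mul_of_nonneg_left (hle h h.2 y) (by linarith)
      linarith
    · refine le_of_forall_pos_le_add ?_
      intro ε hε
      obtain ⟨h₁, hh₁⟩ := exists_lt_of_lt_ciSup
        (show b x - ε / 2 < b x by linarith)
      obtain ⟨h₂, hh₂⟩ := exists_lt_of_lt_ciSup
        (show b y - ε / 2 < b y by linarith)
      obtain ⟨h, hhD, hge₁, hge₂⟩ := hdir h₁ h₁.2 h₂ h₂.2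
      have hhaff := hhD.2.1 x y t ht ht'
      have hbpt : (h : K → ℝ) pt ≤ b pt := hle h hhD pt
      have e1 : t * (b x - ε / 2) ≤ t * h x :=
        mul_le_mul_of_nonneg_left (hh₁.le.trans (hge₁ x)) ht
      have e2 : (1 - t) * (b y - ε / 2) ≤ (1 - t) * h y :=
        mul_le_mul_of_nonneg_left (hh₂.le.trans (hge₂ y)) (by linarith)
      nlinarith [hhaff, hbpt]
  exact ⟨b, hlsc, haff, hba a₁ ha₁ ha₁' h11 h12, hba a₂ ha₂ ha₂' h21 h22, hbc₁, hbc₂⟩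
end
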